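/- arXiv:2507.04731 — 12 statements merged into one kernel-verified Lean document; each statement's English description precedes it below -/
import Mathlib

section
/- Assume every matrix A_i (i = 1,…,m) is invertible. Then the reachable set R = ∪_π R(π) (union over all finite switching sequences π) is equal to the linear subspace V_n, where V_1 = Σ_{i=1}^m Im(B_i) and V_{k+1} = V_k + Σ_{i=1}^m A_i V_k; in particular, R is a linear subspace of ℝ^n. -/
/-- Reachable space of a discrete-time switched linear control system
`x_k = A_{i_k} x_{k-1} + B_{i_k} u_k` along the switching sequence `π`
(the head of the list is the first applied mode):
`R(ε) = {0}` and `R(π' i) = A_i R(π') + Im(B_i)`. -/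
def reach {n m : ℕ} (A : Fin m → Matrix (Fin n) (Fin n) ℝ) {q : Fin m → ℕ}
    (B : ∀ i, Matrix (Fin n) (Fin (q i)) ℝ) (π : List (Fin m)) :
    Submodule ℝ (Fin n → ℝ) :=
  π.foldl (fun S i =>
    Submodule.map (Matrix.mulVecLin (A i)) S ⊔ LinearMap.range (Matrix.mulVecLin (B i))) ⊥

/-- The subspaces `V_k`: `V_0 = {0}`, `V_1 = Σ_i Im B_i`, and
`V_{k+1} = V_k + Σ_i A_i V_k` for `k ≥ 1`. -/
def Vsp {n m : ℕ} (A : Fin m → Matrix (Fin n) (Fin n) ℝ) {q : Fin m → ℕ}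
    (B : ∀ i, Matrix (Fin n) (Fin (q i)) ℝ) : ℕ → Submodule ℝ (Fin n → ℝ)
  | 0 => ⊥
  | 1 => ⨆ i, LinearMap.range (Matrix.mulVecLin (B i))
  | (k + 2) => Vsp A B (k + 1) ⊔
      ⨆ i, Submodule.map (Matrix.mulVecLin (A i)) (Vsp A B (k + 1))

namespace SwitchedAux

open Module Submodule

variable {n m : ℕ} (A : Fin m → Matrix (Fin n) (Fin n) ℝ) {q : Fin m → ℕ}
    (B : ∀ i, Matrix (Fin n) (Fin (q i)) ℝ)

/-- One step of the reachability recursion. -/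
def step (S : Submodule ℝ (Fin n → ℝ)) (i : Fin m) : Submodule ℝ (Fin n → ℝ) :=
  Submodule.map (Matrix.mulVecLin (A i)) S ⊔ LinearMap.range (Matrix.mulVecLin (B i))

lemma reach_def (π : List (Fin m)) : reach A B π = π.foldl (step A B) ⊥ := rfl

lemma step_mono {S T : Submodule ℝ (Fin n → ℝ)} (h : S ≤ T) (i : Fin m) :
    step A B S i ≤ step A B T i :=
  sup_le_sup_right (Submodule.map_mono h) _

lemma foldl_mono : ∀ (π : List (Fin m)) {S T : Submodule ℝ (Fin n → ℝ)}, S ≤ T →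
    π.foldl (step A B) S ≤ π.foldl (step A B) T
  | [], _, _, h => h
  | i :: π, _, _, h => foldl_mono π (step_mono A B h i)

lemma reach_append (π σ : List (Fin m)) :
    reach A B (π ++ σ) = σ.foldl (step A B) (reach A B π) := by
  rw [reach_def, List.foldl_append, ← reach_def]

lemma reach_suffix (π σ : List (Fin m)) : reach A B σ ≤ reach A B (π ++ σ) := by
  rw [reach_append, reach_def]
  exact foldl_mono A B σ bot_le

/-- The composite linear map along a switching sequence. -/
def cmp (σ : List (Fin m)) : (Fin n → ℝ) →ₗ[ℝ] (Fin n → ℝ) :=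
  σ.foldl (fun L i => ((A i).mulVecLin).comp L) LinearMap.id

lemma cmp_aux (σ : List (Fin m)) (L K : (Fin n → ℝ) →ₗ[ℝ] (Fin n → ℝ)) :
    σ.foldl (fun L i => ((A i).mulVecLin).comp L) (L.comp K)
      = (σ.foldl (fun L i => ((A i).mulVecLin).comp L) L).comp K := by
  induction σ generalizing L with
  | nil => rfl
  | cons i σ ih =>
      simp only [List.foldl_cons]
      rw [← LinearMap.comp_assoc, ih]

lemma cmp_cons (i : Fin m) (σ : List (Fin m)) :
    cmp A (i :: σ) = (cmp A σ).comp (A i).mulVecLin := by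
  show σ.foldl _ (((A i).mulVecLin).comp LinearMap.id) = _
  rw [LinearMap.comp_id, ← LinearMap.id_comp ((A i).mulVecLin), cmp_aux]
  rfl

lemma foldl_step (σ : List (Fin m)) (S : Submodule ℝ (Fin n → ℝ)) :
    σ.foldl (step A B) S = Submodule.map (cmp A σ) S ⊔ reach A B σ := by
  induction σ generalizing S with
  | nil =>
      show S = Submodule.map LinearMap.id S ⊔ ⊥
      rw [Submodule.map_id, sup_bot_eq]
  | cons i σ ih =>
      have h1 : reach A B (i :: σ) = σ.foldl (step A B) (step A B ⊥ i) := rfl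
      rw [List.foldl_cons, ih, h1, ih]
      simp only [step, Submodule.map_bot, bot_sup_eq, Submodule.map_sup, cmp_cons,
        Submodule.map_comp, sup_assoc]

lemma reach_append' (π σ : List (Fin m)) :
    reach A B (π ++ σ) = Submodule.map (cmp A σ) (reach A B π) ⊔ reach A B σ := by
  rw [reach_append, foldl_step]

lemma mulVecLin_bijective {M : Matrix (Fin n) (Fin n) ℝ} (h : IsUnit M) :
    Function.Bijective M.mulVecLin := by
  obtain ⟨C, h1, h2⟩ := isUnit_iff_exists.mp h
  have e1 : M.mulVecLin.comp C.mulVecLin = LinearMap.id := by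
    rw [← Matrix.mulVecLin_mul, h1, Matrix.mulVecLin_one]
  have e2 : C.mulVecLin.comp M.mulVecLin = LinearMap.id := by
    rw [← Matrix.mulVecLin_mul, h2, Matrix.mulVecLin_one]
  have left : Function.LeftInverse C.mulVecLin M.mulVecLin :=
    fun x => LinearMap.congr_fun e2 x
  have right : Function.RightInverse C.mulVecLin M.mulVecLin :=
    fun x => LinearMap.congr_fun e1 x
  exact ⟨left.injective, right.surjective⟩

lemma cmp_bijective (hA : ∀ i, IsUnit (A i)) (σ : List (Fin m)) :
    Function.Bijective (cmp A σ) := by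
  induction σ with
  | nil => exact Function.bijective_id
  | cons i σ ih =>
      rw [cmp_cons]
      exact ih.comp (mulVecLin_bijective (hA i))

/-! ### Properties of `Vsp` -/

lemma Vsp_le_succ (k : ℕ) : Vsp A B k ≤ Vsp A B (k + 1) := by
  cases k with
  | zero => exact bot_le
  | succ k => exact le_sup_left

lemma Vsp_mono : Monotone (Vsp A B) :=
  monotone_nat_of_le_succ (Vsp_le_succ A B)

lemma Vsp_stabilize (k : ℕ) (h : Vsp A B (k + 1) = Vsp A B k) :
    Vsp A B (k + 2) = Vsp A B (k + 1) := by
  cases k with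
  | zero =>
      have h1 : Vsp A B 1 = ⊥ := h
      show Vsp A B 1 ⊔ (⨆ i, Submodule.map (A i).mulVecLin (Vsp A B 1)) = Vsp A B 1
      simp [h1]
  | succ j =>
      show Vsp A B (j + 2) ⊔ (⨆ i, Submodule.map (A i).mulVecLin (Vsp A B (j + 2)))
          = Vsp A B (j + 2)
      rw [h]
      exact h

lemma Vsp_stable (k : ℕ) (h : Vsp A B (k + 1) = Vsp A B k) :
    ∀ j, Vsp A B (k + j) = Vsp A B k := by
  have step1 : ∀ j, Vsp A B (k + j + 1) = Vsp A B (k + j) := by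
    intro j
    induction j with
    | zero => exact h
    | succ j ih => exact Vsp_stabilize A B (k + j) ih
  intro j
  induction j with
  | zero => rfl
  | succ j ih => rw [← Nat.add_assoc, step1 j, ih]

lemma exists_stab (hn : 1 ≤ n) : ∃ k ≤ n, Vsp A B (k + 1) = Vsp A B k := by
  by_contra hc
  push_neg at hc
  have key : ∀ k, k ≤ n + 1 → k ≤ finrank ℝ (Vsp A B k) := by
    intro k
    induction k with
    | zero => intro _; exact Nat.zero_le _
    | succ k ih =>
        intro hk
        have hlt : Vsp A B k < Vsp A B (k + 1) :=
          lt_of_le_of_ne (Vsp_le_succ A B k) (Ne.symm (hc k (by omega)))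
        have h1 := Submodule.finrank_lt_finrank_of_lt hlt
        have h2 := ih (by omega)
        omega
  have h1 := key (n + 1) le_rfl
  have h2 : finrank ℝ (Vsp A B (n + 1)) ≤ finrank ℝ (Fin n → ℝ) := Submodule.finrank_le _
  rw [Module.finrank_fin_fun] at h2
  omega

lemma Vsp_eventually (hn : 1 ≤ n) : ∀ k, n ≤ k → Vsp A B k = Vsp A B n := by
  obtain ⟨k₀, hk₀n, hstab⟩ := exists_stab A B hn
  have hconst := Vsp_stable A B k₀ hstab
  intro k hk
  have e1 : Vsp A B k = Vsp A B k₀ := by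
    have := hconst (k - k₀); rwa [Nat.add_sub_cancel' (hk₀n.trans hk)] at this
  have e2 : Vsp A B n = Vsp A B k₀ := by
    have := hconst (n - k₀); rwa [Nat.add_sub_cancel' hk₀n] at this
  rw [e1, e2]

lemma reach_le_Vsp (π : List (Fin m)) : reach A B π ≤ Vsp A B π.length := by
  induction π using List.reverseRecOn with
  | nil => exact bot_le
  | append_singleton π i ih =>
      have h1 : reach A B (π ++ [i]) = step A B (reach A B π) i := by
        rw [reach_append]; rfl
      rw [h1, List.length_append, List.length_singleton]
      apply sup_le
      · -- map A_i (reach π) ≤ Vsp (len + 1)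
        refine le_trans (Submodule.map_mono ih) ?_
        cases hπ : π.length with
        | zero =>
            have : Vsp A B 0 = ⊥ := rfl
            rw [this, Submodule.map_bot]
            exact bot_le
        | succ j =>
            have : Submodule.map (A i).mulVecLin (Vsp A B (j + 1)) ≤ Vsp A B (j + 2) :=
              le_trans (le_iSup (fun i => Submodule.map (A i).mulVecLin (Vsp A B (j + 1))) i)
                le_sup_right
            exact this
      · -- range B_i ≤ Vsp (len + 1)
        have h2 : LinearMap.range (B i).mulVecLin ≤ Vsp A B 1 :=
          le_iSup (fun i => LinearMap.range (B i).mulVecLin) i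
        exact h2.trans (Vsp_mono A B (by omega))

lemma reach_le_VspN (hn : 1 ≤ n) (π : List (Fin m)) : reach A B π ≤ Vsp A B n := by
  refine (reach_le_Vsp A B π).trans ?_
  rcases le_or_gt π.length n with h | h
  · exact Vsp_mono A B h
  · rw [Vsp_eventually A B hn π.length h.le]

lemma exists_max : ∃ π₀ : List (Fin m),
    ∀ π, finrank ℝ (reach A B π) ≤ finrank ℝ (reach A B π₀) := by
  set S : Set ℕ := Set.range fun π : List (Fin m) => finrank ℝ (reach A B π) with hS
  have hne : S.Nonempty := ⟨_, ⟨[], rfl⟩⟩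
  have hbd : BddAbove S := by
    refine ⟨n, ?_⟩
    rintro _ ⟨π, rfl⟩
    have := Submodule.finrank_le (reach A B π)
    rwa [Module.finrank_fin_fun] at this
  obtain ⟨π₀, hπ₀⟩ := Nat.sSup_mem hne hbd
  exact ⟨π₀, fun π => (le_csSup hbd ⟨π, rfl⟩).trans hπ₀.ge⟩

end SwitchedAux

open SwitchedAux Module Submodule in
/-- If all `A_i` are invertible, the reachable set equals the subspace `V_n`. -/
theorem stmt1 {n m : ℕ} (hn : 1 ≤ n) (hm : 1 ≤ m)
    (A : Fin m → Matrix (Fin n) (Fin n) ℝ) {q : Fin m → ℕ}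
    (B : ∀ i, Matrix (Fin n) (Fin (q i)) ℝ)
    (hA : ∀ i, IsUnit (A i)) :
    (⋃ π : List (Fin m), (reach A B π : Set (Fin n → ℝ))) = ↑(Vsp A B n) := by
  classical
  obtain ⟨π₀, hmax⟩ := exists_max A B
  set U := reach A B π₀ with hU
  -- appending π₀ doesn't change maximal reach spaces
  have habs : ∀ σ, reach A B (σ ++ π₀) = U := by
    intro σ
    refine (Submodule.eq_of_le_of_finrank_le (reach_suffix A B σ π₀) (hmax _)).symm
  have hmapU : ∀ σ, Submodule.map (cmp A π₀) (reach A B σ) ≤ U := by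
    intro σ
    have := reach_append' A B σ π₀
    rw [habs σ] at this
    exact le_sup_left.trans_eq this.symm
  have hbij := cmp_bijective A hA π₀
  -- map (cmp π₀) U = U
  have hEU : Submodule.map (cmp A π₀) U = U := by
    refine Submodule.eq_of_le_of_finrank_le (hmapU π₀) ?_
    have := LinearEquiv.finrank_map_eq (LinearEquiv.ofBijective (cmp A π₀) hbij) U
    exact this.ge
  -- every reach space is contained in U
  have hle : ∀ σ, reach A B σ ≤ U := by
    intro σ
    have h1 : Submodule.map (cmp A π₀) (reach A B σ) ≤ Submodule.map (cmp A π₀) U := by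
      rw [hEU]; exact hmapU σ
    exact (Submodule.map_le_map_iff_of_injective hbij.injective _ _).mp h1
  -- U contains all Im B_i
  have hB : ∀ i, LinearMap.range (B i).mulVecLin ≤ U := by
    intro i
    have h1 : LinearMap.range (B i).mulVecLin ≤ reach A B [i] := by
      show LinearMap.range (B i).mulVecLin ≤
        Submodule.map (A i).mulVecLin ⊥ ⊔ LinearMap.range (B i).mulVecLin
      exact le_sup_right
    exact h1.trans (hle [i])
  -- U is invariant under each A_i
  have hinv : ∀ i, Submodule.map (A i).mulVecLin U ≤ U := by
    intro i
    have h1 : Submodule.map (A i).mulVecLin U ≤ reach A B (π₀ ++ [i]) := by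
      rw [reach_append]
      exact le_sup_left
    exact h1.trans (hle _)
  -- hence every V_k is contained in U
  have hV : ∀ k, Vsp A B k ≤ U := by
    have haux : ∀ k, Vsp A B (k + 1) ≤ U := by
      intro k
      induction k with
      | zero => exact iSup_le hB
      | succ k ih =>
          show Vsp A B (k + 1) ⊔ (⨆ i, Submodule.map (A i).mulVecLin (Vsp A B (k + 1))) ≤ U
          exact sup_le ih (iSup_le fun i => (Submodule.map_mono ih).trans (hinv i))
    intro k
    cases k with
    | zero => exact bot_le
    | succ k => exact haux k
  have hUV : U = Vsp A B n :=
    le_antisymm (reach_le_VspN A B hn π₀) (hV n)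
  apply Set.Subset.antisymm
  · refine Set.iUnion_subset fun σ => ?_
    exact fun x hx => hUV ▸ (hle σ hx)
  · intro x hx
    refine Set.mem_iUnion.mpr ⟨π₀, ?_⟩
    show x ∈ (U : Set (Fin n → ℝ))
    rw [hUV]
    exact hx
end

section
/- Assume every matrix A_i (i = 1,…,m) is invertible. Then the system is controllable (i.e., ∪_π R(π) = ℝ^n) if and only if span{ A_{i_k}⋯A_{i_2} b : 1 ≤ k ≤ n, (i_1,…,i_k) ∈ {1,…,m}^k, b ∈ Im(B_{i_1}) } = ℝ^n (with the convention that for k = 1 the vector is b ∈ Im(B_{i_1}) itself). -/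
section Aux

open Module Submodule

variable {n m : ℕ} (A : Fin m → Matrix (Fin n) (Fin n) ℝ) {q : Fin m → ℕ}
    (B : ∀ i, Matrix (Fin n) (Fin (q i)) ℝ)

/-- One step of the reachability recursion. -/
def swStep (S : Submodule ℝ (Fin n → ℝ)) (i : Fin m) : Submodule ℝ (Fin n → ℝ) :=
  Submodule.map (Matrix.mulVecLin (A i)) S ⊔ LinearMap.range (Matrix.mulVecLin (B i))

lemma reach_def (π : List (Fin m)) : reach A B π = π.foldl (swStep A B) ⊥ := rfl

/-- Product of the `A`'s along a word, in the order of application. -/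
def prodA (l : List (Fin m)) : Matrix (Fin n) (Fin n) ℝ := ((l.map A).reverse.prod)

lemma swStep_mono {S T : Submodule ℝ (Fin n → ℝ)} (h : S ≤ T) (i : Fin m) :
    swStep A B S i ≤ swStep A B T i :=
  sup_le_sup (Submodule.map_mono h) le_rfl

lemma foldl_mono {S T : Submodule ℝ (Fin n → ℝ)} (h : S ≤ T) (π : List (Fin m)) :
    π.foldl (swStep A B) S ≤ π.foldl (swStep A B) T := by
  induction π generalizing S T with
  | nil => exact h
  | cons i t ih => exact ih (swStep_mono A B h i)

lemma reach_append (a b : List (Fin m)) :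
    reach A B (a ++ b) = b.foldl (swStep A B) (reach A B a) := by
  rw [reach_def, reach_def, List.foldl_append]

lemma reach_suffix_le (a b : List (Fin m)) : reach A B b ≤ reach A B (a ++ b) := by
  rw [reach_append, reach_def]
  exact foldl_mono A B bot_le b

lemma prodA_nil : prodA A ([] : List (Fin m)) = 1 := rfl

lemma prodA_concat (l : List (Fin m)) (i : Fin m) :
    prodA A (l ++ [i]) = A i * prodA A l := by
  simp [prodA, List.prod_concat]

lemma prodA_cons (l : List (Fin m)) (i : Fin m) :
    prodA A (i :: l) = prodA A l * A i := by
  simp [prodA, List.prod_concat]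

lemma isUnit_prodA (hA : ∀ i, IsUnit (A i)) (l : List (Fin m)) : IsUnit (prodA A l) := by
  refine List.prod_isUnit fun M hM => ?_
  rw [List.mem_reverse, List.mem_map] at hM
  obtain ⟨i, -, rfl⟩ := hM
  exact hA i

lemma map_prodA_le (l : List (Fin m)) (S : Submodule ℝ (Fin n → ℝ)) :
    Submodule.map (Matrix.mulVecLin (prodA A l)) S ≤ l.foldl (swStep A B) S := by
  induction l generalizing S with
  | nil => simp [prodA_nil, Matrix.mulVecLin_one]
  | cons i t ih =>
    rw [prodA_cons, Matrix.mulVecLin_mul, Submodule.map_comp]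
    calc Submodule.map (Matrix.mulVecLin (prodA A t))
          (Submodule.map (Matrix.mulVecLin (A i)) S)
        ≤ t.foldl (swStep A B) (Submodule.map (Matrix.mulVecLin (A i)) S) := ih _
      _ ≤ t.foldl (swStep A B) (swStep A B S i) := foldl_mono A B le_sup_left t
      _ = (i :: t).foldl (swStep A B) S := rfl

/-- `mulVecLin` of an invertible matrix is injective. -/
lemma mulVecLin_inj {M : Matrix (Fin n) (Fin n) ℝ} (h : IsUnit M) :
    Function.Injective (Matrix.mulVecLin M) := by
  have h1 : Matrix.mulVecLin M⁻¹ ∘ₗ Matrix.mulVecLin M = LinearMap.id := by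
    rw [← Matrix.mulVecLin_mul,
      Matrix.nonsing_inv_mul _ ((Matrix.isUnit_iff_isUnit_det M).mp h), Matrix.mulVecLin_one]
  intro x y hxy
  have h2 := congrArg (Matrix.mulVecLin M⁻¹) hxy
  rwa [← LinearMap.comp_apply, ← LinearMap.comp_apply, h1, LinearMap.id_apply,
    LinearMap.id_apply] at h2

lemma finrank_map_mulVecLin {M : Matrix (Fin n) (Fin n) ℝ} (h : IsUnit M)
    (S : Submodule ℝ (Fin n → ℝ)) :
    finrank ℝ (Submodule.map (Matrix.mulVecLin M) S) = finrank ℝ S := by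
  have hInv : Invertible M := h.invertible
  have : (Matrix.mulVecLin M) = ((M.toLinearEquiv' hInv : (Fin n → ℝ) ≃ₗ[ℝ] (Fin n → ℝ)) :
      (Fin n → ℝ) →ₗ[ℝ] (Fin n → ℝ)) := by
    rw [Matrix.toLinearEquiv'_apply, Matrix.toLin'_apply']
  rw [this, LinearEquiv.finrank_map_eq]

lemma vsp_le_succ : ∀ k, Vsp A B k ≤ Vsp A B (k + 1)
  | 0 => bot_le
  | (k + 1) => le_sup_left

lemma vsp_mono {k j : ℕ} (h : k ≤ j) : Vsp A B k ≤ Vsp A B j := by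
  induction j with
  | zero => simpa [Nat.le_zero.mp h]
  | succ j ih =>
    rcases Nat.lt_or_ge k (j + 1) with h' | h'
    · exact (ih (Nat.lt_succ_iff.mp h')).trans (vsp_le_succ A B j)
    · have : k = j + 1 := le_antisymm h h'
      simp [this]

lemma range_le_vsp_one (i : Fin m) :
    LinearMap.range (Matrix.mulVecLin (B i)) ≤ Vsp A B 1 :=
  le_iSup (fun i => LinearMap.range (Matrix.mulVecLin (B i))) i

lemma map_vsp_le (i : Fin m) : ∀ k, Submodule.map (Matrix.mulVecLin (A i)) (Vsp A B k)
    ≤ Vsp A B (k + 1)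
  | 0 => by simp [Vsp]
  | (k + 1) => le_sup_of_le_right
      (le_iSup (fun i => Submodule.map (Matrix.mulVecLin (A i)) (Vsp A B (k + 1))) i)

lemma reach_le_vsp (π : List (Fin m)) : reach A B π ≤ Vsp A B π.length := by
  induction π using List.reverseRecOn with
  | nil => simp [reach]
  | append_singleton l i ih =>
    rw [reach_append]
    simp only [List.foldl_cons, List.foldl_nil, List.length_append, List.length_cons,
      List.length_nil]
    refine sup_le ?_ ?_
    · exact le_trans (Submodule.map_mono ih) (map_vsp_le A B i l.length)
    · exact le_trans (range_le_vsp_one A B i)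
        (vsp_mono A B (Nat.succ_le_succ (Nat.zero_le _)))

lemma vsp_stab_step {k : ℕ} (h : Vsp A B (k + 1) = Vsp A B k) :
    Vsp A B (k + 2) = Vsp A B (k + 1) := by
  cases k with
  | zero =>
    have h1 : Vsp A B 1 = (⊥ : Submodule ℝ (Fin n → ℝ)) := h
    show Vsp A B 1 ⊔ _ = Vsp A B 1
    rw [h1]
    simp
  | succ s =>
    show Vsp A B (s + 2) ⊔ _ = Vsp A B (s + 2)
    rw [h]
    exact h

lemma vsp_stab_of' {k : ℕ} (h : Vsp A B (k + 1) = Vsp A B k) :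
    ∀ j, Vsp A B (k + j + 1) = Vsp A B (k + j) := by
  intro j
  induction j with
  | zero => exact h
  | succ j ih => exact vsp_stab_step A B ih

lemma vsp_stab_of {k : ℕ} (h : Vsp A B (k + 1) = Vsp A B k) :
    ∀ j, Vsp A B (k + j) = Vsp A B k := by
  intro j
  induction j with
  | zero => rfl
  | succ j ih => exact (vsp_stab_of' A B h j).trans ih

lemma vsp_stable (hj : n ≤ j) : Vsp A B j = Vsp A B n := by
  by_cases h : ∃ k < n, Vsp A B (k + 1) = Vsp A B k
  · obtain ⟨k, hk, heq⟩ := h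
    have h1 : Vsp A B j = Vsp A B k := by
      have := vsp_stab_of A B heq (j - k)
      rwa [Nat.add_sub_cancel' (le_trans (le_of_lt hk) hj)] at this
    have h2 : Vsp A B n = Vsp A B k := by
      have := vsp_stab_of A B heq (n - k)
      rwa [Nat.add_sub_cancel' (le_of_lt hk)] at this
    rw [h1, h2]
  · push_neg at h
    have hrank : ∀ k ≤ n, k ≤ Module.finrank ℝ (Vsp A B k) := by
      intro k hk
      induction k with
      | zero => exact Nat.zero_le _
      | succ k ih =>
        have hlt : Vsp A B k < Vsp A B (k + 1) :=
          lt_of_le_of_ne (vsp_le_succ A B k) (Ne.symm (h k hk))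
        exact Nat.succ_le_of_lt
          (lt_of_le_of_lt (ih (le_trans (Nat.le_succ k) hk))
            (Submodule.finrank_lt_finrank_of_lt hlt))
    have htop : Vsp A B n = ⊤ := by
      apply Submodule.eq_top_of_finrank_eq
      have h1 : Module.finrank ℝ (Fin n → ℝ) = n := Module.finrank_fin_fun ℝ
      have h2 := Submodule.finrank_le (Vsp A B n)
      have h3 := hrank n le_rfl
      omega
    rw [htop, eq_top_iff]
    rw [eq_top_iff] at htop
    exact le_trans htop (vsp_mono A B hj)

lemma reach_le_vspn (π : List (Fin m)) : reach A B π ≤ Vsp A B n := by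
  rcases Nat.le_total π.length n with h | h
  · exact le_trans (reach_le_vsp A B π) (vsp_mono A B h)
  · exact le_of_le_of_eq (reach_le_vsp A B π) (vsp_stable A B h)

/-- The generating set of products applied to columns spaces, with words of length `< k`. -/
def Xset (k : ℕ) : Set (Fin n → ℝ) :=
  {x : Fin n → ℝ | ∃ (l : List (Fin m)) (i : Fin m) (b : Fin n → ℝ),
    l.length + 1 ≤ k ∧ b ∈ LinearMap.range (Matrix.mulVecLin (B i)) ∧
    x = Matrix.mulVec ((l.map A).reverse.prod) b}

lemma span_Xset : ∀ k, Submodule.span ℝ (Xset A B k) = Vsp A B k := by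
  intro k
  induction k with
  | zero =>
    have : Xset A B 0 = ∅ := by
      ext x
      simp only [Xset, Set.mem_setOf_eq, Set.mem_empty_iff_false, iff_false]
      rintro ⟨l, i, b, hl, -, -⟩
      omega
    rw [this, Submodule.span_empty]
    rfl
  | succ k ih =>
    cases k with
    | zero =>
      apply le_antisymm
      · rw [Submodule.span_le]
        rintro x ⟨l, i, b, hl, hb, rfl⟩
        have hl0 : l = [] := List.length_eq_zero_iff.mp (by omega)
        subst hl0
        simp only [List.map_nil, List.reverse_nil, List.prod_nil, Matrix.one_mulVec]
        exact range_le_vsp_one A B i hb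
      · refine iSup_le fun i => ?_
        intro b hb
        apply Submodule.subset_span
        exact ⟨[], i, b, le_rfl, hb, by
          simp [Matrix.one_mulVec]⟩
    | succ s =>
      apply le_antisymm
      · rw [Submodule.span_le]
        rintro x ⟨l, i, b, hl, hb, rfl⟩
        rcases l.eq_nil_or_concat with rfl | ⟨l', j, rfl⟩
        · have : (Matrix.mulVec (1 : Matrix (Fin n) (Fin n) ℝ) b) ∈ Vsp A B 1 :=
            by rw [Matrix.one_mulVec]; exact range_le_vsp_one A B i hb
          simp only [List.map_nil, List.reverse_nil, List.prod_nil]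
          exact vsp_mono A B (Nat.one_le_iff_ne_zero.mpr (by omega)) this
        · rw [List.concat_eq_append] at hl ⊢
          have hx : Matrix.mulVec (((l' ++ [j]).map A).reverse.prod) b
              = Matrix.mulVecLin (A j) (Matrix.mulVec ((l'.map A).reverse.prod) b) := by
            have : ((l' ++ [j]).map A).reverse.prod = A j * (l'.map A).reverse.prod := by
              simpa [prodA] using prodA_concat A l' j
            rw [this, Matrix.mulVecLin_apply, Matrix.mulVec_mulVec]
          rw [hx]
          have hy : Matrix.mulVec ((l'.map A).reverse.prod) b ∈ Vsp A B (s + 1) := by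
            rw [← ih]
            apply Submodule.subset_span
            exact ⟨l', i, b, by simp at hl; omega, hb, rfl⟩
          exact le_sup_of_le_right
            (le_iSup (fun j => Submodule.map (Matrix.mulVecLin (A j)) (Vsp A B (s + 1))) j)
            ⟨_, hy, rfl⟩
      · refine sup_le ?_ ?_
        · rw [← ih]
          apply Submodule.span_mono
          rintro x ⟨l, i, b, hl, hb, rfl⟩
          exact ⟨l, i, b, by omega, hb, rfl⟩
        · refine iSup_le fun j => ?_
          rw [← ih, Submodule.map_span]
          apply Submodule.span_mono
          rintro x ⟨y, ⟨l, i, b, hl, hb, rfl⟩, rfl⟩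
          refine ⟨l ++ [j], i, b, by simp; omega, hb, ?_⟩
          have : ((l ++ [j]).map A).reverse.prod = A j * (l.map A).reverse.prod := by
            simpa [prodA] using prodA_concat A l j
          rw [this, Matrix.mulVecLin_apply, Matrix.mulVec_mulVec]

lemma exists_reach_top (hA : ∀ i, IsUnit (A i)) (h : Vsp A B n = ⊤) :
    ∃ w : List (Fin m), reach A B w = ⊤ := by
  classical
  set D := Set.range (fun π : List (Fin m) => Module.finrank ℝ (reach A B π)) with hD
  have hDne : D.Nonempty := ⟨_, ⟨[], rfl⟩⟩
  have hDbdd : BddAbove D := by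
    refine ⟨n, ?_⟩
    rintro d ⟨π, rfl⟩
    exact le_trans (Submodule.finrank_le _) (le_of_eq (Module.finrank_fin_fun ℝ))
  obtain ⟨w, hw⟩ := Nat.sSup_mem hDne hDbdd
  have hmax : ∀ u, Module.finrank ℝ (reach A B u) ≤ Module.finrank ℝ (reach A B w) := by
    intro u
    have h1 : Module.finrank ℝ (reach A B u) ≤ sSup D := le_csSup hDbdd ⟨u, rfl⟩
    have h2 : Module.finrank ℝ (reach A B w) = sSup D := hw
    omega
  have key1 : ∀ u, reach A B (w ++ u)
      = Submodule.map (Matrix.mulVecLin (prodA A u)) (reach A B w) := by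
    intro u
    have le1 : Submodule.map (Matrix.mulVecLin (prodA A u)) (reach A B w)
        ≤ reach A B (w ++ u) := by
      rw [reach_append]; exact map_prodA_le A B u _
    refine (Submodule.eq_of_le_of_finrank_le le1 ?_).symm
    rw [finrank_map_mulVecLin (isUnit_prodA A hA u)]
    exact hmax _
  have key2 : Submodule.map (Matrix.mulVecLin (prodA A w)) (reach A B w) = reach A B w := by
    have e := key1 w
    have hww : reach A B w = reach A B (w ++ w) :=
      Submodule.eq_of_le_of_finrank_le (reach_suffix_le A B w w)
        (by rw [e, finrank_map_mulVecLin (isUnit_prodA A hA w)])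
    exact e.symm.trans hww.symm
  have key3 : ∀ i, Submodule.map (Matrix.mulVecLin (A i)) (reach A B w) = reach A B w := by
    intro i
    have e := key1 ([i] ++ w)
    have hp : prodA A ([i] ++ w) = prodA A w * A i := prodA_cons A w i
    rw [hp, Matrix.mulVecLin_mul, Submodule.map_comp] at e
    have heq : reach A B w = reach A B (w ++ ([i] ++ w)) := by
      refine Submodule.eq_of_le_of_finrank_le ?_ ?_
      · rw [← List.append_assoc]
        exact reach_suffix_le A B (w ++ [i]) w
      · rw [key1 ([i] ++ w), finrank_map_mulVecLin (isUnit_prodA A hA _)]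
    apply Submodule.map_injective_of_injective (mulVecLin_inj (isUnit_prodA A hA w))
    rw [← e, key2]
    exact heq.symm
  have key4 : ∀ i, LinearMap.range (Matrix.mulVecLin (B i)) ≤ reach A B w := by
    intro i
    have e : reach A B (w ++ [i]) = swStep A B (reach A B w) i := by
      rw [reach_append]; rfl
    have e2 := key1 [i]
    have hp : prodA A [i] = A i := by simp [prodA]
    rw [hp, key3 i] at e2
    have h3 : LinearMap.range (Matrix.mulVecLin (B i)) ≤ reach A B (w ++ [i]) := by
      rw [e]; exact le_sup_right
    rwa [e2] at h3
  have key5 : ∀ k, Vsp A B k ≤ reach A B w := by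
    intro k
    induction k with
    | zero => exact bot_le
    | succ k ih =>
      cases k with
      | zero => exact iSup_le key4
      | succ s =>
        refine sup_le ih (iSup_le fun i => ?_)
        calc Submodule.map (Matrix.mulVecLin (A i)) (Vsp A B (s + 1))
            ≤ Submodule.map (Matrix.mulVecLin (A i)) (reach A B w) := Submodule.map_mono ih
          _ = reach A B w := key3 i
  refine ⟨w, ?_⟩
  rw [eq_top_iff, ← h]
  exact key5 n

end Aux

/-- Kalman-type controllability criterion for switched linear control systems. -/
theorem stmt2 {n m : ℕ} (hn : 1 ≤ n) (hm : 1 ≤ m)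
    (A : Fin m → Matrix (Fin n) (Fin n) ℝ) {q : Fin m → ℕ}
    (B : ∀ i, Matrix (Fin n) (Fin (q i)) ℝ)
    (hA : ∀ i, IsUnit (A i)) :
    (⋃ π : List (Fin m), (reach A B π : Set (Fin n → ℝ))) = Set.univ ↔
      Submodule.span ℝ {x : Fin n → ℝ | ∃ (l : List (Fin m)) (i : Fin m) (b : Fin n → ℝ),
        l.length + 1 ≤ n ∧ b ∈ LinearMap.range (Matrix.mulVecLin (B i)) ∧
        x = Matrix.mulVec ((l.map A).reverse.prod) b} = ⊤ := by
  have ekey : Submodule.span ℝ {x : Fin n → ℝ | ∃ (l : List (Fin m)) (i : Fin m)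
        (b : Fin n → ℝ), l.length + 1 ≤ n ∧ b ∈ LinearMap.range (Matrix.mulVecLin (B i)) ∧
        x = Matrix.mulVec ((l.map A).reverse.prod) b} = Vsp A B n := span_Xset A B n
  rw [ekey]
  constructor
  · intro h
    rw [eq_top_iff]
    intro x _
    have hx : x ∈ ⋃ π : List (Fin m), (reach A B π : Set (Fin n → ℝ)) := by
      rw [h]; trivial
    obtain ⟨_, ⟨π, rfl⟩, hx⟩ := hx
    exact reach_le_vspn A B π hx
  · intro h
    obtain ⟨w, hw⟩ := exists_reach_top A B hA h
    refine Set.eq_univ_iff_forall.mpr fun x => Set.mem_iUnion.mpr ⟨w, ?_⟩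
    rw [hw]
    trivial
end

section
/- For every integer p ≥ 1, V_p equals the sum of the subspaces R(π) over all switching sequences π with entries in {1,…,m} of length between 1 and p, i.e., V_p = Σ_{π : 1 ≤ |π| ≤ p} R(π). (No invertibility assumption on the A_i is needed.) -/
lemma reach_concat {n m : ℕ} (A : Fin m → Matrix (Fin n) (Fin n) ℝ) {q : Fin m → ℕ}
    (B : ∀ i, Matrix (Fin n) (Fin (q i)) ℝ) (π : List (Fin m)) (i : Fin m) :
    reach A B (π ++ [i]) =
      Submodule.map (Matrix.mulVecLin (A i)) (reach A B π) ⊔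
        LinearMap.range (Matrix.mulVecLin (B i)) := by
  simp [reach, List.foldl_append]

lemma reach_singleton {n m : ℕ} (A : Fin m → Matrix (Fin n) (Fin n) ℝ) {q : Fin m → ℕ}
    (B : ∀ i, Matrix (Fin n) (Fin (q i)) ℝ) (i : Fin m) :
    reach A B [i] = LinearMap.range (Matrix.mulVecLin (B i)) := by
  simp [reach]

/-- `V_p` is the sum of the reachable spaces `R(π)` over sequences of length between `1` and `p`. -/
theorem stmt5 {n m : ℕ} (hn : 1 ≤ n) (hm : 1 ≤ m)
    (A : Fin m → Matrix (Fin n) (Fin n) ℝ) {q : Fin m → ℕ}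
    (B : ∀ i, Matrix (Fin n) (Fin (q i)) ℝ)
    (p : ℕ) (hp : 1 ≤ p) :
    Vsp A B p =
      ⨆ π : {l : List (Fin m) // 1 ≤ l.length ∧ l.length ≤ p}, reach A B π.1 := by
  induction p, hp using Nat.le_induction with
  | base =>
    show (⨆ i, LinearMap.range (Matrix.mulVecLin (B i))) = _
    apply le_antisymm
    · apply iSup_le; intro i
      refine le_trans ?_ (le_iSup _ (⟨[i], by simp, by simp⟩ :
        {l : List (Fin m) // 1 ≤ l.length ∧ l.length ≤ 1}))
      rw [reach_singleton]
    · apply iSup_le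
      rintro ⟨π, h1, h2⟩
      obtain ⟨i, rfl⟩ := List.length_eq_one_iff.mp (le_antisymm h2 h1)
      rw [reach_singleton]
      exact le_iSup (fun i => LinearMap.range (Matrix.mulVecLin (B i))) i
  | succ p hp ih =>
    obtain ⟨k, rfl⟩ : ∃ k, p = k + 1 := ⟨p - 1, (Nat.succ_pred_eq_of_pos hp).symm⟩
    show Vsp A B (k+1) ⊔ (⨆ i, Submodule.map (Matrix.mulVecLin (A i)) (Vsp A B (k+1))) = _
    rw [ih]
    apply le_antisymm
    · apply sup_le
      · apply iSup_le; rintro ⟨π, h1, h2⟩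
        exact le_iSup_of_le ⟨π, h1, h2.trans (Nat.le_succ _)⟩ le_rfl
      · apply iSup_le; intro i
        rw [Submodule.map_iSup]
        apply iSup_le; rintro ⟨π, h1, h2⟩
        refine le_trans ?_ (le_iSup _ (⟨π ++ [i], by simp, by simp; omega⟩ :
          {l : List (Fin m) // 1 ≤ l.length ∧ l.length ≤ k + 1 + 1}))
        rw [reach_concat]
        exact le_sup_left
    · apply iSup_le; rintro ⟨π, h1, h2⟩
      rcases Nat.lt_or_ge π.length (k + 2) with h | h
      · exact le_sup_of_le_left (le_iSup_of_le ⟨π, h1, by omega⟩ le_rfl)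
      · have hlen : π.length = k + 2 := le_antisymm h2 h
        obtain ⟨π', i, rfl⟩ : ∃ π' i, π = π' ++ [i] := by
          rcases π.eq_nil_or_concat with rfl | ⟨a, b, hh⟩
          · simp at hlen
          · exact ⟨a, b, by rw [hh, List.concat_eq_append]⟩
        rw [reach_concat]
        have hlen' : π'.length = k + 1 := by
          simp at hlen; omega
        apply sup_le
        · refine le_sup_of_le_right (le_iSup_of_le i (Submodule.map_mono ?_))
          exact le_iSup_of_le ⟨π', by omega, by omega⟩ le_rfl
        · refine le_sup_of_le_left (le_iSup_of_le ⟨[i], by simp, by simp⟩ ?_)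
          rw [reach_singleton]
end

section
/- Assume every matrix A_i (i = 1,…,m) is invertible. If π is a finite switching sequence such that dim R(π) ≥ dim R(π') for every finite switching sequence π', then R(π') ⊆ R(π) for every finite switching sequence π'; consequently the reachable set R = ∪_{π'} R(π') equals R(π). -/
/-- The composed transition map along a switching sequence. -/
def Phi {n m : ℕ} (A : Fin m → Matrix (Fin n) (Fin n) ℝ) : List (Fin m) →
    ((Fin n → ℝ) →ₗ[ℝ] (Fin n → ℝ))
  | [] => LinearMap.id
  | (i :: t) => (Phi A t).comp (Matrix.mulVecLin (A i))

lemma foldl_eq {n m : ℕ} (A : Fin m → Matrix (Fin n) (Fin n) ℝ) {q : Fin m → ℕ}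
    (B : ∀ i, Matrix (Fin n) (Fin (q i)) ℝ) (τ : List (Fin m))
    (S : Submodule ℝ (Fin n → ℝ)) :
    τ.foldl (fun S i =>
      Submodule.map (Matrix.mulVecLin (A i)) S ⊔ LinearMap.range (Matrix.mulVecLin (B i))) S
      = Submodule.map (Phi A τ) S ⊔ reach A B τ := by
  induction τ generalizing S with
  | nil => simp [Phi, reach]
  | cons i t ih =>
      have hr : reach A B (i :: t)
          = Submodule.map (Phi A t) (LinearMap.range (Matrix.mulVecLin (B i)))
            ⊔ reach A B t := by
        show List.foldl _ _ _ = _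
        rw [List.foldl_cons, ← ih]
        simp
      rw [List.foldl_cons, ih, hr, Submodule.map_sup, Phi, Submodule.map_comp, sup_assoc]

lemma phi_injective {n m : ℕ} (A : Fin m → Matrix (Fin n) (Fin n) ℝ)
    (hA : ∀ i, IsUnit (A i)) (τ : List (Fin m)) :
    Function.Injective (Phi A τ) := by
  induction τ with
  | nil => exact fun x y h => h
  | cons i t ih =>
      have hAi : Function.Injective (Matrix.mulVecLin (A i)) := by
        obtain ⟨u, hu⟩ := hA i
        have h1 : (↑u⁻¹ : Matrix (Fin n) (Fin n) ℝ) * A i = 1 := by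
          rw [← hu]; exact u.inv_mul
        have hLI : Function.LeftInverse (Matrix.mulVecLin (↑u⁻¹ : Matrix (Fin n) (Fin n) ℝ))
            (Matrix.mulVecLin (A i)) := by
          intro x
          have h2 := congrArg (fun M => Matrix.mulVecLin M x) h1
          simpa [Matrix.mulVecLin_mul] using h2
        exact hLI.injective
      exact ih.comp hAi

/-- A reachable space of maximal dimension contains every reachable space,
hence equals the reachable set. -/
theorem stmt6 {n m : ℕ} (hn : 1 ≤ n) (hm : 1 ≤ m)
    (A : Fin m → Matrix (Fin n) (Fin n) ℝ) {q : Fin m → ℕ}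
    (B : ∀ i, Matrix (Fin n) (Fin (q i)) ℝ)
    (hA : ∀ i, IsUnit (A i)) (π : List (Fin m))
    (hmax : ∀ π' : List (Fin m),
      Module.finrank ℝ (reach A B π') ≤ Module.finrank ℝ (reach A B π)) :
    (∀ π' : List (Fin m), reach A B π' ≤ reach A B π) ∧
    (⋃ π' : List (Fin m), (reach A B π' : Set (Fin n → ℝ))) = ↑(reach A B π) := by
  have hinj := phi_injective A hA π
  -- reach of a concatenation
  have happ : ∀ σ : List (Fin m),
      reach A B (σ ++ π) = Submodule.map (Phi A π) (reach A B σ) ⊔ reach A B π := by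
    intro σ
    show List.foldl _ _ _ = _
    rw [List.foldl_append]
    exact foldl_eq A B π _
  -- maximality forces reach (σ ++ π) = reach π
  have hcat : ∀ σ : List (Fin m), reach A B (σ ++ π) = reach A B π := by
    intro σ
    have hle : reach A B π ≤ reach A B (σ ++ π) := by
      rw [happ σ]; exact le_sup_right
    exact (Submodule.eq_of_le_of_finrank_le hle (hmax _)).symm
  have hmap : ∀ σ : List (Fin m),
      Submodule.map (Phi A π) (reach A B σ) ≤ reach A B π := by
    intro σ
    have := hcat σ
    rw [happ σ] at this
    exact le_sup_left.trans this.le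
  -- Phi π maps reach π onto itself
  have hself : Submodule.map (Phi A π) (reach A B π) = reach A B π := by
    have hle := hmap π
    have hrank : Module.finrank ℝ (Submodule.map (Phi A π) (reach A B π))
        = Module.finrank ℝ (reach A B π) :=
      (LinearEquiv.finrank_eq (Submodule.equivMapOfInjective _ hinj _)).symm
    exact Submodule.eq_of_le_of_finrank_le hle hrank.ge
  have key : ∀ π' : List (Fin m), reach A B π' ≤ reach A B π := by
    intro π'
    have h1 : Submodule.map (Phi A π) (reach A B π')
        ≤ Submodule.map (Phi A π) (reach A B π) := by
      rw [hself]; exact hmap π'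
    exact (Submodule.map_le_map_iff_of_injective hinj _ _).mp h1
  refine ⟨key, ?_⟩
  apply Set.Subset.antisymm
  · exact Set.iUnion_subset fun π' => key π'
  · exact Set.subset_iUnion (fun π' => (reach A B π' : Set (Fin n → ℝ))) π
end

section
/- Assume every matrix A_i (i = 1,…,m) is invertible. Let π be a finite switching sequence and let k ≥ 1 be such that dim V_{k-1} ≤ dim R(π) < dim V_k. Then there exists a switching sequence π₀ of length at most k such that dim R(π₀π) > dim R(π), where π₀π denotes the concatenation in which π₀ is applied first. -/
namespace SwAux

variable {n m : ℕ} (A : Fin m → Matrix (Fin n) (Fin n) ℝ) {q : Fin m → ℕ}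
    (B : ∀ i, Matrix (Fin n) (Fin (q i)) ℝ)

def Mmat : List (Fin m) → Matrix (Fin n) (Fin n) ℝ
  | [] => 1
  | i :: π => Mmat π * A i

lemma foldl_sup (π : List (Fin m)) : ∀ S T : Submodule ℝ (Fin n → ℝ),
    π.foldl (fun S i =>
      Submodule.map (Matrix.mulVecLin (A i)) S ⊔ LinearMap.range (Matrix.mulVecLin (B i))) (S ⊔ T)
    = π.foldl (fun S i =>
      Submodule.map (Matrix.mulVecLin (A i)) S ⊔ LinearMap.range (Matrix.mulVecLin (B i))) S
      ⊔ Submodule.map (Matrix.mulVecLin (Mmat A π)) T := by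
  induction π with
  | nil => intro S T; simp [Mmat]
  | cons i π ih =>
    intro S T
    simp only [List.foldl_cons]
    have h1 : Submodule.map (Matrix.mulVecLin (A i)) (S ⊔ T)
        ⊔ LinearMap.range (Matrix.mulVecLin (B i))
        = (Submodule.map (Matrix.mulVecLin (A i)) S ⊔ LinearMap.range (Matrix.mulVecLin (B i)))
          ⊔ Submodule.map (Matrix.mulVecLin (A i)) T := by
      rw [Submodule.map_sup]
      ac_rfl
    rw [h1, ih]
    congr 1
    rw [Mmat, Matrix.mulVecLin_mul, Submodule.map_comp]

lemma reach_append (σ π : List (Fin m)) :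
    reach A B (σ ++ π) = reach A B π ⊔ Submodule.map (Matrix.mulVecLin (Mmat A π)) (reach A B σ) := by
  have := foldl_sup A B π ⊥ (reach A B σ)
  simpa [reach, List.foldl_append] using this

lemma Mmat_isUnit (hA : ∀ i, IsUnit (A i)) (π : List (Fin m)) : IsUnit (Mmat A π) := by
  induction π with
  | nil => simp [Mmat]
  | cons i π ih =>
    show IsUnit (Mmat A π * A i)
    exact ih.mul (hA i)

lemma Vsp_le (j : ℕ) :
    Vsp A B j ≤ ⨆ (σ : List (Fin m)) (_ : σ.length ≤ j), reach A B σ := by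
  induction j using Nat.strong_induction_on with
  | _ j ih =>
    match j with
    | 0 => simp [Vsp]
    | 1 =>
      rw [Vsp]
      refine iSup_le fun i => ?_
      have : LinearMap.range (Matrix.mulVecLin (B i)) = reach A B [i] := by
        simp [reach]
      rw [this]
      exact le_iSup_of_le [i] (le_iSup_of_le (by simp) le_rfl)
    | (j + 2) =>
      rw [Vsp]
      apply sup_le
      · refine (ih (j+1) (by omega)).trans ?_
        refine iSup_le fun σ => iSup_le fun hσ => le_iSup_of_le σ (le_iSup_of_le (by omega) le_rfl)
      · refine iSup_le fun i => ?_
        refine (Submodule.map_mono (ih (j+1) (by omega))).trans ?_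
        rw [Submodule.map_iSup]
        refine iSup_le fun σ => ?_
        rw [Submodule.map_iSup]
        refine iSup_le fun hσ => ?_
        have h2 : Submodule.map (Matrix.mulVecLin (A i)) (reach A B σ) ≤ reach A B (σ ++ [i]) := by
          have : reach A B (σ ++ [i]) =
              Submodule.map (Matrix.mulVecLin (A i)) (reach A B σ)
              ⊔ LinearMap.range (Matrix.mulVecLin (B i)) := by
            simp [reach, List.foldl_append]
          rw [this]; exact le_sup_left
        exact h2.trans (le_iSup_of_le (σ ++ [i]) (le_iSup_of_le (by simp; omega) le_rfl))

end SwAux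


/-- If `dim V_{k-1} ≤ dim R(π) < dim V_k`, then `R(π)` can be strictly enlarged by
prepending a sequence of length at most `k`. -/
theorem stmt7 {n m : ℕ} (hn : 1 ≤ n) (hm : 1 ≤ m)
    (A : Fin m → Matrix (Fin n) (Fin n) ℝ) {q : Fin m → ℕ}
    (B : ∀ i, Matrix (Fin n) (Fin (q i)) ℝ)
    (hA : ∀ i, IsUnit (A i)) (π : List (Fin m)) (k : ℕ) (hk : 1 ≤ k)
    (h₁ : Module.finrank ℝ (Vsp A B (k - 1)) ≤ Module.finrank ℝ (reach A B π))
    (h₂ : Module.finrank ℝ (reach A B π) < Module.finrank ℝ (Vsp A B k)) :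
    ∃ π₀ : List (Fin m), π₀.length ≤ k ∧
      Module.finrank ℝ (reach A B π) < Module.finrank ℝ (reach A B (π₀ ++ π)) := by
  by_contra hcon
  push_neg at hcon
  set f := Matrix.mulVecLin (SwAux.Mmat A π) with hf
  have hMunit := SwAux.Mmat_isUnit A hA π
  have hinj : Function.Injective f := by
    obtain ⟨N, hN⟩ := isUnit_iff_exists.mp hMunit
    intro x y hxy
    have := congrArg (Matrix.mulVecLin N) hxy
    simp only [hf, Matrix.mulVecLin_apply, Matrix.mulVec_mulVec, hN.2,
      Matrix.one_mulVec] at this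
    exact this
  -- key: for all σ of length ≤ k, f(reach σ) ≤ reach π
  have key : ∀ σ : List (Fin m), σ.length ≤ k →
      Submodule.map f (reach A B σ) ≤ reach A B π := by
    intro σ hσ
    have e := SwAux.reach_append A B σ π
    have hle : reach A B π ≤ reach A B (σ ++ π) := e ▸ le_sup_left
    have heq : reach A B (σ ++ π) = reach A B π :=
      (Submodule.eq_of_le_of_finrank_le hle (hcon σ hσ)).symm
    calc Submodule.map f (reach A B σ) ≤ reach A B (σ ++ π) := e ▸ le_sup_right
      _ = reach A B π := heq
  have hV : Submodule.map f (Vsp A B k) ≤ reach A B π := by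
    refine (Submodule.map_mono (SwAux.Vsp_le A B k)).trans ?_
    rw [Submodule.map_iSup]
    refine iSup_le fun σ => ?_
    rw [Submodule.map_iSup]
    exact iSup_le fun hσ => key σ hσ
  have hrank : Module.finrank ℝ (Vsp A B k)
      = Module.finrank ℝ (Submodule.map f (Vsp A B k)) :=
    (Submodule.equivMapOfInjective f hinj (Vsp A B k)).finrank_eq
  have := Submodule.finrank_mono hV
  omega
end

section
/- Assume every matrix A_i (i = 1,…,m) is invertible. If the switched linear control system is controllable, then there exists a controllable switching sequence π (i.e., R(π) = ℝ^n) whose length is at most n(n+1)/2. -/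
namespace Stmt8Aux

open Submodule Module MeasureTheory Matrix

variable {n m : ℕ} (A : Fin m → Matrix (Fin n) (Fin n) ℝ) {q : Fin m → ℕ}
    (B : ∀ i, Matrix (Fin n) (Fin (q i)) ℝ) (hA : ∀ i, IsUnit (A i))

include hA in
lemma bij (i : Fin m) : Function.Bijective (A i).mulVecLin := by
  obtain ⟨u, hu⟩ := hA i
  refine Function.bijective_iff_has_inverse.2
    ⟨((↑u⁻¹ : Matrix (Fin n) (Fin n) ℝ)).mulVecLin, fun x => ?_, fun x => ?_⟩
  · show (↑u⁻¹ : Matrix (Fin n) (Fin n) ℝ) *ᵥ ((A i) *ᵥ x) = x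
    rw [Matrix.mulVec_mulVec, ← hu, u.inv_mul, Matrix.one_mulVec]
  · show (A i) *ᵥ ((↑u⁻¹ : Matrix (Fin n) (Fin n) ℝ) *ᵥ x) = x
    rw [Matrix.mulVec_mulVec, ← hu, u.mul_inv, Matrix.one_mulVec]

/-- The linear equivalence induced by the invertible matrix `A i`. -/
noncomputable def e (i : Fin m) : (Fin n → ℝ) ≃ₗ[ℝ] (Fin n → ℝ) :=
  LinearEquiv.ofBijective _ (bij A hA i)

lemma e_toLinearMap (i : Fin m) : (e A hA i).toLinearMap = (A i).mulVecLin := rfl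

/-- composite flow along a switching sequence (head applied first) -/
noncomputable def Phi : List (Fin m) → ((Fin n → ℝ) ≃ₗ[ℝ] (Fin n → ℝ))
  | [] => LinearEquiv.refl ℝ _
  | i :: σ => (e A hA i).trans (Phi σ)

/-- one step of the reachability recursion -/
def step : Submodule ℝ (Fin n → ℝ) → Fin m → Submodule ℝ (Fin n → ℝ) :=
  fun S i => Submodule.map (A i).mulVecLin S ⊔ LinearMap.range (B i).mulVecLin

lemma reach_def (π : List (Fin m)) : reach A B π = π.foldl (step A B) ⊥ := rfl

lemma map_trans (f g : (Fin n → ℝ) ≃ₗ[ℝ] (Fin n → ℝ)) (S : Submodule ℝ (Fin n → ℝ)) :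
    Submodule.map (f.trans g).toLinearMap S
      = Submodule.map g.toLinearMap (Submodule.map f.toLinearMap S) := by
  rw [← Submodule.map_comp]; rfl

lemma map_symm_map (f : (Fin n → ℝ) ≃ₗ[ℝ] (Fin n → ℝ)) (S : Submodule ℝ (Fin n → ℝ)) :
    Submodule.map f.symm.toLinearMap (Submodule.map f.toLinearMap S) = S := by
  rw [← Submodule.map_comp]
  convert Submodule.map_id S
  ext x; simp

lemma map_map_symm (f : (Fin n → ℝ) ≃ₗ[ℝ] (Fin n → ℝ)) (S : Submodule ℝ (Fin n → ℝ)) :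
    Submodule.map f.toLinearMap (Submodule.map f.symm.toLinearMap S) = S := by
  rw [← Submodule.map_comp]
  convert Submodule.map_id S
  ext x; simp

lemma foldl_step (σ : List (Fin m)) : ∀ S : Submodule ℝ (Fin n → ℝ),
    σ.foldl (step A B) S
      = Submodule.map (Phi A hA σ).toLinearMap S ⊔ reach A B σ := by
  induction σ with
  | nil =>
    intro S
    simp only [List.foldl_nil, Phi, reach_def]
    rw [show (LinearEquiv.refl ℝ (Fin n → ℝ)).toLinearMap = LinearMap.id from rfl,
      Submodule.map_id]
    simp
  | cons i σ ih =>
    intro S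
    have hstep : ∀ T : Submodule ℝ (Fin n → ℝ),
        step A B T i = Submodule.map (e A hA i).toLinearMap T
          ⊔ LinearMap.range (B i).mulVecLin := fun T => rfl
    have hreach : reach A B (i :: σ)
        = Submodule.map (Phi A hA σ).toLinearMap (LinearMap.range (B i).mulVecLin)
          ⊔ reach A B σ := by
      rw [reach_def, List.foldl_cons, ih]
      congr 1
      rw [hstep]
      simp [e_toLinearMap]
    rw [reach_def, List.foldl_cons, ← reach_def, ih, hstep, Submodule.map_sup, hreach,
      show Phi A hA (i :: σ) = (e A hA i).trans (Phi A hA σ) from rfl, map_trans]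
    rw [sup_assoc]

lemma reach_append (π σ : List (Fin m)) :
    reach A B (π ++ σ)
      = Submodule.map (Phi A hA σ).toLinearMap (reach A B π) ⊔ reach A B σ := by
  rw [reach_def, List.foldl_append, ← reach_def, foldl_step]

lemma reach_cons (i : Fin m) (σ : List (Fin m)) :
    reach A B (i :: σ)
      = Submodule.map (Phi A hA σ).toLinearMap (LinearMap.range (B i).mulVecLin)
        ⊔ reach A B σ := by
  have : (i :: σ) = [i] ++ σ := rfl
  rw [this, reach_append A B hA]
  congr 2
  show step A B ⊥ i = _
  show Submodule.map (A i).mulVecLin ⊥ ⊔ _ = _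
  simp

/-- the preimage of the reachable space under the flow -/
noncomputable def Z (σ : List (Fin m)) : Submodule ℝ (Fin n → ℝ) :=
  Submodule.map (Phi A hA σ).symm.toLinearMap (reach A B σ)

lemma Z_nil : Z A B hA ([] : List (Fin m)) = ⊥ := by
  simp [Z, reach_def]

lemma Z_cons (i : Fin m) (σ : List (Fin m)) :
    Z A B hA (i :: σ)
      = Submodule.map (e A hA i).symm.toLinearMap
          (LinearMap.range (B i).mulVecLin ⊔ Z A B hA σ) := by
  have h1 : (Phi A hA (i :: σ)).symm = (Phi A hA σ).symm.trans (e A hA i).symm := by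
    show ((e A hA i).trans (Phi A hA σ)).symm = _
    rw [LinearEquiv.trans_symm]
  rw [Z, h1, map_trans, reach_cons A B hA, Submodule.map_sup, map_symm_map, Z,
    Submodule.map_sup]

/-- the increasing chain of subspaces `U t = Σ_{|σ| ≤ t} Φ_σ⁻¹ R(σ)` -/
noncomputable def U : ℕ → Submodule ℝ (Fin n → ℝ)
  | 0 => ⊥
  | t + 1 => ⨆ i, Submodule.map (e A hA i).symm.toLinearMap
      (LinearMap.range (B i).mulVecLin ⊔ U t)

lemma U_le_succ (t : ℕ) : U A B hA t ≤ U A B hA (t + 1) := by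
  induction t with
  | zero => exact bot_le
  | succ t ih =>
    refine iSup_mono fun i => Submodule.map_mono (sup_le_sup_left ih _)

lemma U_mono : Monotone (U A B hA) := monotone_nat_of_le_succ (U_le_succ A B hA)

lemma Z_le_U (σ : List (Fin m)) : Z A B hA σ ≤ U A B hA σ.length := by
  induction σ with
  | nil => rw [Z_nil]; exact bot_le
  | cons i σ ih =>
    rw [Z_cons]
    calc Submodule.map (e A hA i).symm.toLinearMap
          (LinearMap.range (B i).mulVecLin ⊔ Z A B hA σ)
        ≤ Submodule.map (e A hA i).symm.toLinearMap
          (LinearMap.range (B i).mulVecLin ⊔ U A B hA σ.length) :=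
          Submodule.map_mono (sup_le_sup_left ih _)
      _ ≤ U A B hA (σ.length + 1) := le_iSup (fun j => Submodule.map
            (e A hA j).symm.toLinearMap
            (LinearMap.range (B j).mulVecLin ⊔ U A B hA σ.length)) i

lemma U_le (t : ℕ) : ∀ S : Submodule ℝ (Fin n → ℝ),
    (∀ σ : List (Fin m), σ.length ≤ t → Z A B hA σ ≤ S) → U A B hA t ≤ S := by
  induction t with
  | zero => intro S _; exact bot_le
  | succ t ih =>
    intro S hS
    refine iSup_le fun i => ?_
    have hb : LinearMap.range (B i).mulVecLin ≤
        Submodule.map (e A hA i).toLinearMap S := by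
      have h1 : Z A B hA [i] ≤ S := hS [i] (by simp)
      have h2 : Z A B hA [i]
          = Submodule.map (e A hA i).symm.toLinearMap (LinearMap.range (B i).mulVecLin) := by
        rw [Z_cons, Z_nil, sup_bot_eq]
      rw [h2] at h1
      have := Submodule.map_mono (f := (e A hA i).toLinearMap) h1
      rwa [map_map_symm] at this
    have hU : U A B hA t ≤ Submodule.map (e A hA i).toLinearMap S := by
      refine ih _ fun σ hσ => ?_
      have h1 : Z A B hA (i :: σ) ≤ S := hS (i :: σ) (by simpa using hσ)
      rw [Z_cons] at h1
      have h2 : Submodule.map (e A hA i).symm.toLinearMap (Z A B hA σ) ≤ S :=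
        le_trans (Submodule.map_mono le_sup_right) h1
      have := Submodule.map_mono (f := (e A hA i).toLinearMap) h2
      rwa [map_map_symm] at this
    have : LinearMap.range (B i).mulVecLin ⊔ U A B hA t
        ≤ Submodule.map (e A hA i).toLinearMap S := sup_le hb hU
    have := Submodule.map_mono (f := (e A hA i).symm.toLinearMap) this
    rwa [map_symm_map] at this

lemma U_stab {t : ℕ} (h : U A B hA t = U A B hA (t + 1)) :
    ∀ s, U A B hA (t + s) = U A B hA t := by
  intro s
  induction s with
  | zero => rfl
  | succ s ih =>
    have : U A B hA (t + s + 1) = U A B hA (t + 1) := by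
      show (⨆ i, Submodule.map (e A hA i).symm.toLinearMap
          (LinearMap.range (B i).mulVecLin ⊔ U A B hA (t + s))) = _
      rw [ih]; rfl
    rw [show t + (s + 1) = t + s + 1 from rfl, this, ← h]

lemma finrank_map_phi (g : (Fin n → ℝ) ≃ₗ[ℝ] (Fin n → ℝ)) (S : Submodule ℝ (Fin n → ℝ)) :
    finrank ℝ (Submodule.map g.toLinearMap S) = finrank ℝ S := by
  rw [show Submodule.map g.toLinearMap S = Submodule.map (g : (Fin n → ℝ) →ₗ[ℝ] _) S from rfl]
  exact LinearEquiv.finrank_map_eq g S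

include hA in
/-- key step : from any sequence whose reachable space is a proper subspace, a controllable
system allows increasing the reachable dimension within `d+1` extra steps. -/
lemma key (hctrl : (⋃ π : List (Fin m), (reach A B π : Set (Fin n → ℝ))) = Set.univ)
    (π : List (Fin m)) (hlt : finrank ℝ (reach A B π) < n) :
    ∃ σ : List (Fin m), σ.length ≤ finrank ℝ (reach A B π) + 1 ∧
      finrank ℝ (reach A B π) + 1 ≤ finrank ℝ (reach A B (π ++ σ)) := by
  by_contra hcon
  push_neg at hcon
  set d := finrank ℝ (reach A B π) with hd
  set S := reach A B π with hSdef
  -- every short preimage sits inside S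
  have hZ : ∀ σ : List (Fin m), σ.length ≤ d + 1 → Z A B hA σ ≤ S := by
    intro σ hσ
    have h1 : finrank ℝ (reach A B (π ++ σ)) ≤ d := by
      have := hcon σ hσ; omega
    have h2 : Submodule.map (Phi A hA σ).toLinearMap S ≤ reach A B (π ++ σ) := by
      rw [reach_append A B hA]; exact le_sup_left
    have h3 : finrank ℝ (Submodule.map (Phi A hA σ).toLinearMap S) = d := by
      rw [finrank_map_phi]
    have h4 : Submodule.map (Phi A hA σ).toLinearMap S = reach A B (π ++ σ) :=
      Submodule.eq_of_le_of_finrank_le h2 (by rw [h3]; exact h1)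
    have h5 : reach A B σ ≤ Submodule.map (Phi A hA σ).toLinearMap S := by
      rw [h4, reach_append A B hA]; exact le_sup_right
    have := Submodule.map_mono (f := (Phi A hA σ).symm.toLinearMap) h5
    rwa [map_symm_map] at this
  have hUS : ∀ t ≤ d + 1, U A B hA t ≤ S := fun t ht =>
    U_le A B hA t S fun σ hσ => hZ σ (hσ.trans ht)
  -- the chain U must stall before d+1
  have hstall : ∃ t ≤ d, U A B hA t = U A B hA (t + 1) := by
    by_contra hc
    push_neg at hc
    have hrank : ∀ t ≤ d + 1, t ≤ finrank ℝ (U A B hA t) := by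
      intro t
      induction t with
      | zero => intro _; exact Nat.zero_le _
      | succ t ih =>
        intro ht
        have h1 : U A B hA t < U A B hA (t + 1) :=
          lt_of_le_of_ne (U_le_succ A B hA t) (hc t (by omega))
        have h2 := Submodule.finrank_lt_finrank_of_lt h1
        have h3 := ih (by omega)
        omega
    have h1 := hrank (d + 1) le_rfl
    have h2 : finrank ℝ (U A B hA (d + 1)) ≤ d := by
      rw [hd]; exact Submodule.finrank_mono (hUS (d + 1) le_rfl)
    omega
  obtain ⟨t, htd, ht⟩ := hstall
  -- hence every preimage, of any length, sits inside S
  have hallZ : ∀ σ : List (Fin m), Z A B hA σ ≤ S := by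
    intro σ
    rcases le_or_gt σ.length t with h | h
    · exact le_trans (Z_le_U A B hA σ) (le_trans (U_mono A B hA h)
        (hUS t (by omega)))
    · have : U A B hA σ.length = U A B hA t := by
        have := U_stab A B hA ht (σ.length - t)
        rwa [show t + (σ.length - t) = σ.length by omega] at this
      exact le_trans (Z_le_U A B hA σ) (le_trans (le_of_eq this) (hUS t (by omega)))
  -- so all reachable spaces lie in proper subspaces; contradiction with controllability
  have hsub : ∀ σ : List (Fin m),
      (reach A B σ : Set (Fin n → ℝ)) ⊆ (Submodule.map (Phi A hA σ).toLinearMap S :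
        Set (Fin n → ℝ)) := by
    intro σ
    have := Submodule.map_mono (f := (Phi A hA σ).toLinearMap) (hallZ σ)
    rw [Z, map_map_symm] at this
    exact this
  have hproper : ∀ σ : List (Fin m),
      Submodule.map (Phi A hA σ).toLinearMap S ≠ ⊤ := by
    intro σ hT
    have h1 : finrank ℝ (Submodule.map (Phi A hA σ).toLinearMap S) = d := finrank_map_phi _ _
    rw [hT, finrank_top, Module.finrank_pi, Fintype.card_fin] at h1
    omega
  have h0 : volume (⋃ σ : List (Fin m), (reach A B σ : Set (Fin n → ℝ))) = 0 := by
    refine measure_mono_null (Set.iUnion_mono fun σ => hsub σ) ?_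
    exact measure_iUnion_null fun σ =>
      Measure.addHaar_submodule volume _ (hproper σ)
  rw [hctrl] at h0
  have : (Set.univ : Set (Fin n → ℝ)).Nonempty := Set.univ_nonempty
  exact (isOpen_univ.measure_ne_zero volume this) h0

/-- arithmetic helper: triangle numbers -/
lemma tri_succ (d : ℕ) : (d + 1) * (d + 2) / 2 = d * (d + 1) / 2 + (d + 1) := by
  have h1 : 2 ∣ d * (d + 1) := (Nat.even_mul_succ_self d).two_dvd
  have h2 : 2 ∣ (d + 1) * (d + 2) := (Nat.even_mul_succ_self (d + 1)).two_dvd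
  obtain ⟨a, ha⟩ := h1
  obtain ⟨b, hb⟩ := h2
  rw [ha, hb, Nat.mul_div_cancel_left a (by norm_num), Nat.mul_div_cancel_left b (by norm_num)]
  nlinarith [ha, hb]

lemma tri_mono : Monotone (fun d => d * (d + 1) / 2) := by
  intro a b hab
  exact Nat.div_le_div_right (Nat.mul_le_mul hab (by omega))

include hA in
lemma build (hctrl : (⋃ π : List (Fin m), (reach A B π : Set (Fin n → ℝ))) = Set.univ) :
    ∀ k : ℕ, ∀ π : List (Fin m), n - finrank ℝ (reach A B π) ≤ k →
      π.length ≤ finrank ℝ (reach A B π) * (finrank ℝ (reach A B π) + 1) / 2 →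
      ∃ π' : List (Fin m), reach A B π' = ⊤ ∧ π'.length ≤ n * (n + 1) / 2 := by
  intro k
  induction k with
  | zero =>
    intro π h1 h2
    have hle : finrank ℝ (reach A B π) ≤ n := by
      have := Submodule.finrank_le (reach A B π)
      rwa [Module.finrank_pi, Fintype.card_fin] at this
    have heq : finrank ℝ (reach A B π) = n := by omega
    refine ⟨π, ?_, by rw [← heq]; exact h2⟩
    apply Submodule.eq_top_of_finrank_eq
    rw [heq, Module.finrank_pi, Fintype.card_fin]
  | succ k ih =>
    intro π h1 h2
    rcases Nat.lt_or_ge (finrank ℝ (reach A B π)) n with hlt | hge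
    · obtain ⟨σ, hσlen, hσrank⟩ := key A B hA hctrl π hlt
      set d := finrank ℝ (reach A B π) with hd
      set d' := finrank ℝ (reach A B (π ++ σ)) with hd'
      have hd'le : d' ≤ n := by
        have := Submodule.finrank_le (reach A B (π ++ σ))
        rwa [Module.finrank_pi, Fintype.card_fin] at this
      refine ih (π ++ σ) (by omega) ?_
      calc (π ++ σ).length = π.length + σ.length := List.length_append
        _ ≤ d * (d + 1) / 2 + (d + 1) := by omega
        _ = (d + 1) * (d + 2) / 2 := (tri_succ d).symm
        _ ≤ d' * (d' + 1) / 2 := tri_mono (by omega)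
    · have heq : finrank ℝ (reach A B π) = n := by
        have := Submodule.finrank_le (reach A B π)
        rw [Module.finrank_pi, Fintype.card_fin] at this
        omega
      refine ⟨π, ?_, ?_⟩
      · apply Submodule.eq_top_of_finrank_eq
        rw [heq, Module.finrank_pi, Fintype.card_fin]
      · rw [heq] at h2; exact h2

end Stmt8Aux

/-- A controllable switched linear control system with invertible `A_i` admits a
controllable sequence of length at most `n(n+1)/2`. -/
theorem stmt8 {n m : ℕ} (hn : 1 ≤ n) (hm : 1 ≤ m)
    (A : Fin m → Matrix (Fin n) (Fin n) ℝ) {q : Fin m → ℕ}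
    (B : ∀ i, Matrix (Fin n) (Fin (q i)) ℝ)
    (hA : ∀ i, IsUnit (A i))
    (hctrl : (⋃ π : List (Fin m), (reach A B π : Set (Fin n → ℝ))) = Set.univ) :
    ∃ π : List (Fin m), reach A B π = ⊤ ∧ π.length ≤ n * (n + 1) / 2 := by
  have hnil : reach A B ([] : List (Fin m)) = ⊥ := rfl
  have h0 : Module.finrank ℝ (reach A B ([] : List (Fin m))) = 0 := by
    rw [hnil]; exact finrank_bot ℝ _
  exact Stmt8Aux.build A B hA hctrl n [] (by omega) (by simp [h0])
end

section
/- For all integers n, m with 1 ≤ m ≤ n there exist invertible matrices A_1,…,A_m ∈ ℝ^{n×n} and matrices B_1,…,B_m ∈ ℝ^{n×1} such that the associated switched linear control system is controllable, there exists a controllable switching sequence of length n + m(m-1)/2, and no controllable switching sequence has length strictly smaller than n + m(m-1)/2. -/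
namespace S9

open Finset

section
variable (n m : ℕ) (hm : 1 ≤ m) (hmn : m ≤ n)

/-- the cycle `0 ↦ 1 ↦ ⋯ ↦ n-m ↦ 0`, fixing everything above `n-m`. -/
def cyc : Equiv.Perm (Fin n) where
  toFun x := if h : x.val < n - m then ⟨x.val + 1, by have := hmn; omega⟩
    else if x.val = n - m then ⟨0, lt_of_lt_of_le hm hmn⟩ else x
  invFun x := if x.val = 0 then ⟨n - m, by have h1 := hm; have h2 := hmn; omega⟩
    else if h : x.val ≤ n - m then ⟨x.val - 1, by have := x.isLt; omega⟩ else x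
  left_inv x := by
    obtain ⟨v, hv⟩ := x
    have h1 := hm; have h2 := hmn
    dsimp only
    by_cases hc : v < n - m
    · rw [dif_pos hc]
      simp only [Fin.val_mk]
      rw [if_neg (by omega), dif_pos (by omega)]
      exact Fin.ext (by simp)
    · rw [dif_neg hc]
      by_cases hd : v = n - m
      · rw [if_pos hd]
        simp only [Fin.val_mk]
        rw [if_pos trivial]
        exact Fin.ext (by simp [hd])
      · rw [if_neg hd]
        simp only [Fin.val_mk]
        rw [if_neg (by omega), dif_neg (by omega)]
  right_inv x := by
    obtain ⟨v, hv⟩ := x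
    have h1 := hm; have h2 := hmn
    dsimp only
    by_cases hc : v = 0
    · rw [if_pos hc]
      simp only [Fin.val_mk]
      rw [dif_neg (by omega), if_pos trivial]
      exact Fin.ext (by simp [hc])
    · rw [if_neg hc]
      by_cases hd : v ≤ n - m
      · rw [dif_pos hd]
        simp only [Fin.val_mk]
        rw [dif_pos (by omega)]
        exact Fin.ext (by simp; omega)
      · rw [dif_neg hd]
        simp only [Fin.val_mk]
        rw [dif_neg (by omega), if_neg (by omega)]

lemma cyc_val (x : Fin n) : ((cyc n m hm hmn) x).val =
    if x.val < n - m then x.val + 1 else if x.val = n - m then 0 else x.val := by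
  rcases x with ⟨v, hv⟩
  simp only [cyc, Equiv.coe_fn_mk]
  split_ifs <;> rfl

lemma cyc_symm_val (x : Fin n) : ((cyc n m hm hmn).symm x).val =
    if x.val = 0 then n - m else if x.val ≤ n - m then x.val - 1 else x.val := by
  rcases x with ⟨v, hv⟩
  simp only [cyc, Equiv.coe_fn_symm_mk]
  split_ifs <;> rfl

/-- mode `0` is the cycle; mode `j ≥ 1` is the transposition `(n-j-1, n-j)`. -/
def pm (i : Fin m) : Equiv.Perm (Fin n) :=
  if h : i.val = 0 then cyc n m hm hmn
  else Equiv.swap ⟨n - i.val - 1, by have := lt_of_lt_of_le hm hmn; omega⟩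
    ⟨n - i.val, by have h1 := i.isLt; have h2 := hmn; omega⟩

lemma pm_zero {i : Fin m} (h : i.val = 0) : pm n m hm hmn i = cyc n m hm hmn := dif_pos h

lemma pm_swap {i : Fin m} (h : ¬ i.val = 0) : pm n m hm hmn i =
    Equiv.swap ⟨n - i.val - 1, by have := lt_of_lt_of_le hm hmn; omega⟩
      ⟨n - i.val, by have h1 := i.isLt; have h2 := hmn; omega⟩ := dif_neg h

/-- value-level formula for the transposition modes -/
lemma pm_swap_val {i : Fin m} (h : ¬ i.val = 0) (x : Fin n) :
    ((pm n m hm hmn i) x).val =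
    if x.val = n - i.val - 1 then n - i.val
    else if x.val = n - i.val then n - i.val - 1 else x.val := by
  rw [pm_swap n m hm hmn h, Equiv.swap_apply_def]
  simp only [Fin.ext_iff, Fin.val_mk]
  split_ifs <;> rfl

def o0 : Fin n := ⟨0, lt_of_lt_of_le hm hmn⟩

def z0 : Fin m := ⟨0, hm⟩

def inp (i : Fin m) : Finset (Fin n) := if i.val = 0 then {o0 n m hm hmn} else ∅

noncomputable def AA : Fin m → Matrix (Fin n) (Fin n) ℝ := fun i =>
  LinearMap.toMatrix' (LinearMap.funLeft ℝ ℝ ⇑(pm n m hm hmn i).symm)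

def BB : Fin m → Matrix (Fin n) (Fin 1) ℝ := fun i =>
  Matrix.of fun r _ => if i.val = 0 ∧ r.val = 0 then 1 else 0

def cov (π : List (Fin m)) : Finset (Fin n) :=
  π.foldl (fun s i => s.image ⇑(pm n m hm hmn i) ∪ inp n m hm hmn i) ∅

lemma cov_nil : cov n m hm hmn [] = ∅ := rfl

lemma cov_append (π : List (Fin m)) (i : Fin m) :
    cov n m hm hmn (π ++ [i]) =
      (cov n m hm hmn π).image ⇑(pm n m hm hmn i) ∪ inp n m hm hmn i := by
  simp [cov, List.foldl_append]

lemma mulVecLin_AA (i : Fin m) :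
    Matrix.mulVecLin (AA n m hm hmn i) = LinearMap.funLeft ℝ ℝ ⇑(pm n m hm hmn i).symm := by
  rw [AA, ← Matrix.toLin'_apply', Matrix.toLin'_toMatrix']

lemma isUnit_AA (i : Fin m) : IsUnit (AA n m hm hmn i) := by
  have hid : LinearMap.funLeft ℝ ℝ (id : Fin n → Fin n) = LinearMap.id := by
    ext f x
    simp [LinearMap.funLeft_apply]
  rw [isUnit_iff_exists]
  refine ⟨LinearMap.toMatrix' (LinearMap.funLeft ℝ ℝ ⇑(pm n m hm hmn i)), ?_, ?_⟩
  · simp only [AA]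
    rw [← LinearMap.toMatrix'_comp, ← LinearMap.funLeft_comp, Equiv.self_comp_symm,
      hid, LinearMap.toMatrix'_id]
  · simp only [AA]
    rw [← LinearMap.toMatrix'_comp, ← LinearMap.funLeft_comp, Equiv.symm_comp_self,
      hid, LinearMap.toMatrix'_id]

lemma funLeft_symm_single (e : Equiv.Perm (Fin n)) (t : Fin n) :
    LinearMap.funLeft ℝ ℝ ⇑e.symm (Pi.single t 1) = Pi.single (e t) (1 : ℝ) := by
  ext s
  simp only [LinearMap.funLeft_apply, Pi.single_apply]
  by_cases hst : s = e t
  · subst hst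
    simp
  · rw [if_neg hst, if_neg (fun hc => hst (by rw [← hc, Equiv.apply_symm_apply]))]

lemma range_BB (i : Fin m) :
    LinearMap.range (Matrix.mulVecLin (BB n m i)) =
      Submodule.span ℝ ((fun t => Pi.single t (1 : ℝ)) '' (inp n m hm hmn i : Set (Fin n))) := by
  by_cases h : i.val = 0
  · have hB : ∀ u : Fin 1 → ℝ, Matrix.mulVecLin (BB n m i) u
        = u 0 • (Pi.single (o0 n m hm hmn) (1 : ℝ) : Fin n → ℝ) := by
      intro u
      funext r
      simp only [Matrix.mulVecLin_apply, Matrix.mulVec, dotProduct, Fin.sum_univ_one, BB,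
        Matrix.of_apply, Pi.smul_apply, Pi.single_apply, o0, Fin.ext_iff, h, true_and,
        smul_eq_mul]
      split_ifs <;> ring
    apply le_antisymm
    · rintro x ⟨u, rfl⟩
      rw [hB]
      exact Submodule.smul_mem _ _ (Submodule.subset_span (by simp [inp, h]))
    · rw [Submodule.span_le]
      rintro x ⟨t, ht, rfl⟩
      simp only [inp, h, if_true, coe_singleton, Set.mem_singleton_iff] at ht
      subst ht
      exact ⟨fun _ => 1, by rw [hB]; simp⟩
  · have : BB n m i = 0 := by
      ext r c
      simp [BB, h]
    simp [this, inp, h]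

lemma reach_eq (π : List (Fin m)) :
    reach (AA n m hm hmn) (BB n m) π =
      Submodule.span ℝ ((fun t => Pi.single t (1 : ℝ)) '' (cov n m hm hmn π : Set (Fin n))) := by
  induction π using List.reverseRecOn with
  | nil => simp [reach, cov_nil]
  | append_singleton π i ih =>
    have hstep : reach (AA n m hm hmn) (BB n m) (π ++ [i]) =
        Submodule.map (Matrix.mulVecLin (AA n m hm hmn i))
            (reach (AA n m hm hmn) (BB n m) π)
          ⊔ LinearMap.range (Matrix.mulVecLin (BB n m i)) := by
      simp [reach, List.foldl_append]
    rw [hstep, ih, Submodule.map_span, range_BB n m hm hmn, ← Submodule.span_union, cov_append]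
    congr 1
    rw [mulVecLin_AA]
    simp only [coe_union, coe_image, Set.image_union, Set.image_image,
      funLeft_symm_single]

lemma span_singles_top :
    Submodule.span ℝ ((fun t => Pi.single t (1 : ℝ)) '' ((univ : Finset (Fin n)) : Set (Fin n)))
      = ⊤ := by
  have h := (Pi.basisFun ℝ (Fin n)).span_eq
  rw [← h]
  congr 1
  ext x
  simp [Set.range, Pi.basisFun_apply, eq_comm]

lemma reach_top_iff (π : List (Fin m)) :
    reach (AA n m hm hmn) (BB n m) π = ⊤ ↔ cov n m hm hmn π = univ := by
  rw [reach_eq]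
  constructor
  · intro h
    by_contra hne
    obtain ⟨t, ht⟩ : ∃ t, t ∉ cov n m hm hmn π := by
      by_contra hc
      push_neg at hc
      exact hne (eq_univ_iff_forall.2 hc)
    have hle : Submodule.span ℝ
        ((fun t => Pi.single t (1 : ℝ)) '' (cov n m hm hmn π : Set (Fin n)))
        ≤ LinearMap.ker (LinearMap.proj (R := ℝ) (φ := fun _ : Fin n => ℝ) t) := by
      rw [Submodule.span_le]
      rintro _ ⟨s, hs, rfl⟩
      have hst : s ≠ t := by rintro rfl; exact ht hs
      simp [LinearMap.mem_ker, Pi.single_apply, hst]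
    rw [h] at hle
    have h1 : Pi.single t (1 : ℝ) ∈ LinearMap.ker
        (LinearMap.proj (R := ℝ) (φ := fun _ : Fin n => ℝ) t) := hle trivial
    simp [LinearMap.mem_ker] at h1
  · intro h
    rw [h]
    exact span_singles_top n

lemma mem_image_perm (e : Equiv.Perm (Fin n)) (s : Finset (Fin n)) (x : Fin n) :
    x ∈ s.image ⇑e ↔ e.symm x ∈ s := by
  constructor
  · rw [mem_image]
    rintro ⟨y, hy, rfl⟩
    simpa using hy
  · intro h
    exact mem_image.2 ⟨e.symm x, h, e.apply_symm_apply x⟩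

/-- positions `< a` -/
def Cv (a : ℕ) : Finset (Fin n) := univ.filter (fun x => x.val < a)

lemma mem_Cv {a : ℕ} {x : Fin n} : x ∈ Cv n a ↔ x.val < a := by simp [Cv]

lemma pm_zero_symm_val (x : Fin n) :
    ((pm n m hm hmn (z0 m hm)).symm x).val =
    if x.val = 0 then n - m else if x.val ≤ n - m then x.val - 1 else x.val := by
  rw [pm_zero n m hm hmn rfl, cyc_symm_val]

lemma pm_swap_symm_val {i : Fin m} (h : ¬ i.val = 0) (x : Fin n) :
    ((pm n m hm hmn i).symm x).val =
    if x.val = n - i.val - 1 then n - i.val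
    else if x.val = n - i.val then n - i.val - 1 else x.val := by
  have hs : (pm n m hm hmn i).symm = pm n m hm hmn i := by
    rw [pm_swap n m hm hmn h, Equiv.symm_swap]
  rw [hs, pm_swap_val n m hm hmn h]

lemma mem_inp_z0 (x : Fin n) : x ∈ inp n m hm hmn (z0 m hm) ↔ x.val = 0 := by
  simp [inp, z0, o0, Fin.ext_iff]

lemma cov_replicate (k : ℕ) (hk : k ≤ n - m + 1) :
    cov n m hm hmn (List.replicate k (z0 m hm)) = Cv n k := by
  induction k with
  | zero =>
    ext x
    simp [cov_nil, Cv]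
  | succ k ih =>
    rw [List.replicate_succ', cov_append, ih (by omega)]
    ext x
    rw [Finset.mem_union, mem_image_perm, mem_Cv, mem_Cv, mem_inp_z0,
      pm_zero_symm_val n m hm hmn x]
    have h1 := hm; have h2 := hmn
    split_ifs with ha hb <;> omega

end

/-- the cascade with `q` swaps: modes `m-q, m-q+1, …, m-1`, then mode `0`. -/
def casc (m : ℕ) (hm : 1 ≤ m) : ℕ → List (Fin m)
  | 0 => [z0 m hm]
  | (q+1) => (⟨m - (q+1), by omega⟩ : Fin m) :: casc m hm q

/-- the word: base `0^(n-m+1)` followed by cascades `1, 2, …` -/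
def wrd (n m : ℕ) (hm : 1 ≤ m) : ℕ → List (Fin m)
  | 0 => List.replicate (n - m + 1) (z0 m hm)
  | (t+1) => wrd n m hm t ++ casc m hm (t+1)

section
variable (n m : ℕ) (hm : 1 ≤ m) (hmn : m ≤ n)

lemma casc_length (q : ℕ) : (casc m hm q).length = q + 1 := by
  induction q with
  | zero => rfl
  | succ q ih => simp [casc, ih]

lemma wrd_length_two (t : ℕ) :
    2 * (wrd n m hm t).length = 2 * (n - m + 1) + 2 * t + t * (t + 1) := by
  induction t with
  | zero => simp [wrd]
  | succ t ih =>
    have hr : (t + 1) * (t + 1 + 1) = t * (t + 1) + 2 * (t + 1) := by ring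
    simp only [wrd, List.length_append, casc_length]
    omega

lemma cov_casc (q : ℕ) (hq : q ≤ m - 1) : ∀ (T : ℕ), q ≤ T → T ≤ m - 1 →
    ∀ l : List (Fin m),
    cov n m hm hmn l = (Cv n (n - m + T + 1)).erase
      ⟨n - m + q, by have h1 := hm; have h2 := hmn; omega⟩ →
    cov n m hm hmn (l ++ casc m hm q) = Cv n (n - m + T + 1) := by
  have h1 := hm; have h2 := hmn
  induction q with
  | zero =>
    intro T hqT hT l hl
    rw [show casc m hm 0 = [z0 m hm] from rfl, cov_append, hl]
    ext x
    rw [Finset.mem_union, mem_image_perm, Finset.mem_erase, mem_Cv, mem_Cv, mem_inp_z0]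
    simp only [ne_eq, Fin.ext_iff, Fin.val_mk]
    rw [pm_zero_symm_val n m hm hmn x]
    split_ifs with ha hb <;> omega
  | succ q ih =>
    intro T hqT hT l hl
    rw [show casc m hm (q+1)
        = (⟨m - (q+1), by omega⟩ : Fin m) :: casc m hm q from rfl,
      show l ++ ((⟨m - (q+1), by omega⟩ : Fin m) :: casc m hm q)
        = (l ++ [(⟨m - (q+1), by omega⟩ : Fin m)]) ++ casc m hm q by simp]
    apply ih (by omega) T (by omega) hT
    rw [cov_append, hl]
    have hv : ¬ ((⟨m - (q+1), by omega⟩ : Fin m)).val = 0 := by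
      simp only [Fin.val_mk]
      omega
    have hinp : inp n m hm hmn (⟨m - (q+1), by omega⟩ : Fin m) = ∅ := by
      simp only [inp, Fin.val_mk, if_neg (by omega : ¬ (m - (q+1) = 0))]
    rw [hinp]
    ext x
    rw [Finset.union_empty, mem_image_perm, Finset.mem_erase, Finset.mem_erase, mem_Cv, mem_Cv]
    simp only [ne_eq, Fin.ext_iff, Fin.val_mk]
    rw [pm_swap_symm_val n m hm hmn hv x]
    simp only [Fin.val_mk]
    have hnn : n - (m - (q+1)) = n - m + q + 1 := by omega
    rw [hnn]
    split_ifs with ha hb <;> omega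

lemma cov_wrd : ∀ t, t ≤ m - 1 → cov n m hm hmn (wrd n m hm t) = Cv n (n - m + 1 + t) := by
  have h1 := hm; have h2 := hmn
  intro t
  induction t with
  | zero =>
    intro _
    rw [show wrd n m hm 0 = List.replicate (n - m + 1) (z0 m hm) from rfl,
      cov_replicate n m hm hmn _ le_rfl]
  | succ t ih =>
    intro ht
    rw [show wrd n m hm (t+1) = wrd n m hm t ++ casc m hm (t+1) from rfl]
    have heq : cov n m hm hmn (wrd n m hm t)
        = (Cv n (n - m + (t+1) + 1)).erase
          ⟨n - m + (t+1), by have h1 := hm; have h2 := hmn; omega⟩ := by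
      rw [ih (by omega)]
      ext x
      simp only [Finset.mem_erase, mem_Cv, Fin.ext_iff, Fin.val_mk, ne_eq]
      omega
    have hc := cov_casc n m hm hmn (t+1) (by omega) (t+1) le_rfl (by omega) _ heq
    rw [hc]
    congr 1
    omega

lemma cov_wrd_univ : cov n m hm hmn (wrd n m hm (m - 1)) = univ := by
  have h1 := hm; have h2 := hmn
  rw [cov_wrd n m hm hmn (m-1) le_rfl]
  ext x
  simp only [mem_Cv, Finset.mem_univ, iff_true]
  have := x.isLt
  omega

lemma wrd_length (hmn' : m ≤ n) : (wrd n m hm (m - 1)).length = n + m * (m - 1) / 2 := by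
  have h1 := hm; have h2 := hmn'
  have h3 := wrd_length_two n m hm (m - 1)
  have h4 : (m - 1) * (m - 1 + 1) = m * (m - 1) := by
    have h5 : m - 1 + 1 = m := by omega
    rw [h5]
    ring
  rw [h4] at h3
  obtain ⟨P, hP⟩ : ∃ P, m * (m - 1) = P := ⟨_, rfl⟩
  rw [hP] at h3 ⊢
  omega

lemma card_cov_le (π : List (Fin m)) :
    (cov n m hm hmn π).card ≤ π.count (z0 m hm) := by
  induction π using List.reverseRecOn with
  | nil => simp [cov_nil]
  | append_singleton π i ih =>
    rw [cov_append, List.count_append]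
    calc ((cov n m hm hmn π).image ⇑(pm n m hm hmn i) ∪ inp n m hm hmn i).card
        ≤ ((cov n m hm hmn π).image ⇑(pm n m hm hmn i)).card + (inp n m hm hmn i).card :=
          Finset.card_union_le _ _
      _ = (cov n m hm hmn π).card + (inp n m hm hmn i).card := by
          rw [Finset.card_image_of_injective _ (pm n m hm hmn i).injective]
      _ ≤ π.count (z0 m hm) + [i].count (z0 m hm) := by
          apply Nat.add_le_add ih
          by_cases h : i = z0 m hm
          · subst h
            simp [inp, z0]
          · have hh : ¬ i.val = 0 := by
              intro hc
              exact h (Fin.ext hc)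
            simp [inp, hh]

def Dg (j : Fin m) : Finset (Fin n) := univ.filter (fun x => n - j.val ≤ x.val)

lemma mem_Dg {j : Fin m} {x : Fin n} : x ∈ Dg n m j ↔ n - j.val ≤ x.val := by simp [Dg]

lemma Dg_card (hmn' : m ≤ n) (j : Fin m) (hj : ¬ j.val = 0) : (Dg n m j).card = j.val := by
  have h2 := hmn'
  have hb : n - j.val < n := by
    have h3 := j.isLt
    omega
  have heq : Dg n m j = Finset.Ici (⟨n - j.val, hb⟩ : Fin n) := by
    ext x
    rw [mem_Dg, Finset.mem_Ici, Fin.le_def]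
  rw [heq, Fin.card_Ici]
  have h3 := j.isLt
  simp only [Fin.val_mk]
  omega

lemma card_gate_le (j : Fin m) (hj : ¬ j.val = 0) (π : List (Fin m)) :
    ((cov n m hm hmn π) ∩ Dg n m j).card ≤ π.count j := by
  have h1 := hm; have h2 := hmn
  have hjm := j.isLt
  induction π using List.reverseRecOn with
  | nil => simp [cov_nil]
  | append_singleton π i ih =>
    rw [cov_append, List.count_append, Finset.union_inter_distrib_right]
    have hinp : inp n m hm hmn i ∩ Dg n m j = ∅ := by
      ext x
      simp only [Finset.mem_inter, mem_Dg, Finset.notMem_empty, iff_false, not_and]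
      intro hx
      have hxo : x = o0 n m hm hmn := by
        by_cases h : i.val = 0 <;> simp [inp, h] at hx
        · exact hx
      subst hxo
      simp only [o0, Fin.val_mk]
      omega
    have hkey : (cov n m hm hmn π).image ⇑(pm n m hm hmn i) ∩ Dg n m j
        = ((cov n m hm hmn π) ∩ (Dg n m j).image ⇑(pm n m hm hmn i).symm).image
            ⇑(pm n m hm hmn i) := by
      ext x
      rw [Finset.mem_inter, mem_image_perm, mem_image_perm, Finset.mem_inter, mem_image_perm]
      simp only [Equiv.symm_symm, Equiv.apply_symm_apply]
    rw [hinp, hkey]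
    by_cases hij : i = j
    · obtain rfl := hij.symm
      have hbnd : n - j.val - 1 < n := by omega
      have hsub : (Dg n m j).image ⇑(pm n m hm hmn j).symm
          ⊆ insert (⟨n - j.val - 1, hbnd⟩ : Fin n) (Dg n m j) := by
        intro x hx
        rw [mem_image_perm] at hx
        simp only [Equiv.symm_symm] at hx
        rw [mem_Dg] at hx
        rw [show ((pm n m hm hmn j) x).val =
            if x.val = n - j.val - 1 then n - j.val
            else if x.val = n - j.val then n - j.val - 1 else x.val
          from pm_swap_val n m hm hmn hj x] at hx
        rw [Finset.mem_insert, mem_Dg, Fin.ext_iff]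
        simp only [Fin.val_mk]
        split_ifs at hx with ha hb <;> omega
      have hc1 : (((cov n m hm hmn π) ∩ (Dg n m j).image ⇑(pm n m hm hmn j).symm).image
              ⇑(pm n m hm hmn j) ∪ ∅).card
          = ((cov n m hm hmn π) ∩ (Dg n m j).image ⇑(pm n m hm hmn j).symm).card := by
        rw [Finset.union_empty,
          Finset.card_image_of_injective _ (pm n m hm hmn j).injective]
      have hc2 : ((cov n m hm hmn π) ∩ (Dg n m j).image ⇑(pm n m hm hmn j).symm).card
          ≤ (insert (⟨n - j.val - 1, hbnd⟩ : Fin n) ((cov n m hm hmn π) ∩ Dg n m j)).card := by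
        apply Finset.card_le_card
        intro x hx
        rw [Finset.mem_inter] at hx
        have hx2 := hsub hx.2
        rw [Finset.mem_insert] at hx2
        rw [Finset.mem_insert, Finset.mem_inter]
        tauto
      have hc3 : (insert (⟨n - j.val - 1, hbnd⟩ : Fin n) ((cov n m hm hmn π) ∩ Dg n m j)).card
          ≤ ((cov n m hm hmn π) ∩ Dg n m j).card + 1 := Finset.card_insert_le _ _
      have hc4 : [j].count j = 1 := by simp
      have hc5 : [j].count j = 1 := by simp
      rw [hc1]
      have := ih
      omega
    · have hfix : (Dg n m j).image ⇑(pm n m hm hmn i).symm = Dg n m j := by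
        ext x
        rw [mem_image_perm]
        simp only [Equiv.symm_symm]
        rw [mem_Dg, mem_Dg]
        by_cases h : i.val = 0
        · rw [pm_zero n m hm hmn h, cyc_val]
          split_ifs with ha hb <;> omega
        · have hvij : ¬ i.val = j.val := by
            intro hc
            exact hij (Fin.ext hc)
          have him := i.isLt
          rw [pm_swap_val n m hm hmn h]
          split_ifs with ha hb <;> omega
      rw [hfix, Finset.union_empty,
        Finset.card_image_of_injective _ (pm n m hm hmn i).injective]
      have hcnt : [i].count j = 0 := by
        simp [List.count_singleton]
        intro hc
        exact hij hc
      rw [hcnt]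
      simpa using ih

lemma length_eq_sum_count (π : List (Fin m)) :
    π.length = ∑ i : Fin m, π.count i := by
  induction π with
  | nil => simp
  | cons a l ih =>
    simp only [List.length_cons, List.count_cons, ih, Finset.sum_add_distrib, beq_iff_eq]
    have hs : (∑ i : Fin m, if a = i then 1 else 0) = 1 := by
      rw [Finset.sum_ite_eq Finset.univ a (fun _ => 1)]
      simp
    omega

end
end S9

/-- For `1 ≤ m ≤ n` there is a controllable system (with invertible `A_i`) whose
shortest controllable sequences have length exactly `n + m(m-1)/2`. -/
theorem stmt9 (n m : ℕ) (hm : 1 ≤ m) (hmn : m ≤ n) :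
    ∃ (A : Fin m → Matrix (Fin n) (Fin n) ℝ) (B : Fin m → Matrix (Fin n) (Fin 1) ℝ),
      (∀ i, IsUnit (A i)) ∧
      (⋃ π : List (Fin m), (reach A B π : Set (Fin n → ℝ))) = Set.univ ∧
      (∃ π : List (Fin m), reach A B π = ⊤ ∧ π.length = n + m * (m - 1) / 2) ∧
      (∀ π : List (Fin m), reach A B π = ⊤ → n + m * (m - 1) / 2 ≤ π.length) := by
  have htop : reach (S9.AA n m hm hmn) (S9.BB n m) (S9.wrd n m hm (m-1)) = ⊤ :=
    (S9.reach_top_iff n m hm hmn _).2 (S9.cov_wrd_univ n m hm hmn)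
  refine ⟨S9.AA n m hm hmn, S9.BB n m, S9.isUnit_AA n m hm hmn, ?_, ?_, ?_⟩
  · rw [Set.eq_univ_iff_forall]
    intro x
    rw [Set.mem_iUnion]
    refine ⟨S9.wrd n m hm (m-1), ?_⟩
    rw [htop]
    trivial
  · exact ⟨S9.wrd n m hm (m-1), htop, S9.wrd_length n m hm hmn⟩
  · intro π hπ
    have hcov := (S9.reach_top_iff n m hm hmn π).1 hπ
    have h0 : n ≤ π.count (S9.z0 m hm) := by
      have h := S9.card_cov_le n m hm hmn π
      rw [hcov] at h
      simpa [Finset.card_univ] using h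
    have hgate : ∀ j : Fin m, ¬ j.val = 0 → j.val ≤ π.count j := by
      intro j hj
      have h := S9.card_gate_le n m hm hmn j hj π
      rw [hcov, Finset.univ_inter, S9.Dg_card n m hmn j hj] at h
      exact h
    have hlen := S9.length_eq_sum_count m π
    have hsplit := (Finset.add_sum_erase Finset.univ (fun i => π.count i)
      (Finset.mem_univ (S9.z0 m hm))).symm
    have hge : ∑ i ∈ Finset.univ.erase (S9.z0 m hm), (i.val)
        ≤ ∑ i ∈ Finset.univ.erase (S9.z0 m hm), π.count i := by
      apply Finset.sum_le_sum
      intro i hi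
      apply hgate
      intro hc
      exact (Finset.mem_erase.1 hi).1 (Fin.ext hc)
    have hsum2 : ∑ i : Fin m, (i.val) = m * (m - 1) / 2 := by
      rw [Fin.sum_univ_eq_sum_range (fun i => i) m, Finset.sum_range_id]
    have hsum3 := (Finset.add_sum_erase Finset.univ (fun i : Fin m => i.val)
      (Finset.mem_univ (S9.z0 m hm))).symm
    have hz : (S9.z0 m hm).val = 0 := rfl
    obtain ⟨P, hP⟩ : ∃ P, m * (m - 1) / 2 = P := ⟨_, rfl⟩
    rw [hP] at hsum2 ⊢
    omega
end

section
/- For all integers n, m with m > n ≥ 1 there exist invertible matrices A_1,…,A_m ∈ ℝ^{n×n} and matrices B_1,…,B_m (with one column each) such that the associated switched linear control system is controllable, there exists a controllable switching sequence of length n(n+1)/2, and no controllable switching sequence has length strictly smaller than n(n+1)/2. -/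
section aux
variable {n m : ℕ}

def s10pmat (σ : Equiv.Perm (Fin n)) : Matrix (Fin n) (Fin n) ℝ :=
  Matrix.of fun r c => if σ c = r then (1:ℝ) else 0

lemma s10pmat_mul (σ τ : Equiv.Perm (Fin n)) : s10pmat σ * s10pmat τ = s10pmat (σ * τ) := by
  ext r c
  simp only [s10pmat, Matrix.mul_apply, Matrix.of_apply]
  rw [Finset.sum_eq_single (τ c)]
  · rw [Equiv.Perm.mul_apply]; simp
  · intro k _ hk; simp [(Ne.symm hk)]
  · simp

lemma s10pmat_one : s10pmat (1 : Equiv.Perm (Fin n)) = 1 := by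
  ext r c
  simp [s10pmat, Matrix.one_apply, eq_comm]

lemma s10_isUnit_pmat (σ : Equiv.Perm (Fin n)) : IsUnit (s10pmat σ) := by
  refine isUnit_iff_exists.2 ⟨s10pmat σ⁻¹, ?_, ?_⟩ <;>
    rw [s10pmat_mul] <;> simp [s10pmat_one]

lemma s10pmat_mulVecLin_single (σ : Equiv.Perm (Fin n)) (t : Fin n) :
    (s10pmat σ).mulVecLin (Pi.single t 1) = Pi.single (σ t) (1:ℝ) := by
  funext r
  simp only [Matrix.mulVecLin_apply]
  rw [Matrix.mulVec_single]
  simp [s10pmat, Pi.single_apply, eq_comm]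

/-- coordinate subspace spanned by `e_t`, `t ∈ T`. -/
def s10coord (T : Finset (Fin n)) : Submodule ℝ (Fin n → ℝ) :=
  Submodule.span ℝ ((fun t => (Pi.single t 1 : Fin n → ℝ)) '' ↑T)

lemma s10coord_empty : s10coord (∅ : Finset (Fin n)) = ⊥ := by
  simp [s10coord]

lemma s10coord_univ : s10coord (Finset.univ : Finset (Fin n)) = ⊤ := by
  rw [s10coord, Finset.coe_univ, Set.image_univ,
    show (fun t => (Pi.single t 1 : Fin n → ℝ)) = ⇑(Pi.basisFun ℝ (Fin n)) from
      funext fun i => (Pi.basisFun_apply ℝ (Fin n) i).symm]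
  exact (Pi.basisFun ℝ (Fin n)).span_eq

lemma s10coord_eq_top (T : Finset (Fin n)) (h : s10coord T = ⊤) : T = Finset.univ := by
  by_contra hT
  obtain ⟨t0, ht0⟩ : ∃ t0, t0 ∉ T := by
    by_contra h'; push_neg at h'; exact hT (Finset.eq_univ_iff_forall.2 h')
  have hle : s10coord T ≤ LinearMap.ker (LinearMap.proj (R := ℝ) (φ := fun _ : Fin n => ℝ) t0) := by
    rw [s10coord, Submodule.span_le]
    rintro _ ⟨t, ht, rfl⟩
    have : t ≠ t0 := fun he => ht0 (he ▸ ht)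
    simp [LinearMap.mem_ker, Pi.single_apply, this]
  rw [h, top_le_iff] at hle
  have : (Pi.single t0 1 : Fin n → ℝ) t0 = 0 := by
    have := LinearMap.congr_fun (LinearMap.ker_eq_top.mp hle) (Pi.single t0 1)
    simpa using this
  simp at this

lemma s10map_coord (σ : Equiv.Perm (Fin n)) (T : Finset (Fin n)) :
    Submodule.map (s10pmat σ).mulVecLin (s10coord T) = s10coord (T.image σ) := by
  rw [s10coord, Submodule.map_span, ← Set.image_comp, s10coord, Finset.coe_image,
    ← Set.image_comp]
  refine congrArg _ (Set.image_congr fun t _ => ?_)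
  exact s10pmat_mulVecLin_single σ t

/-- the permutation attached to mode `i`. -/
def s10perm (n : ℕ) {m : ℕ} (i : Fin m) : Equiv.Perm (Fin n) :=
  if h : (i : ℕ) + 1 < n then Equiv.swap ⟨i, by omega⟩ ⟨i + 1, h⟩ else 1

def s10A (n : ℕ) {m : ℕ} (i : Fin m) : Matrix (Fin n) (Fin n) ℝ :=
  s10pmat (s10perm n i)

def s10B (n : ℕ) {m : ℕ} (i : Fin m) : Matrix (Fin n) (Fin 1) ℝ :=
  if (i : ℕ) + 1 < n then 0
  else Matrix.of fun r (_ : Fin 1) => if (r : ℕ) = n - 1 then 1 else 0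

/-- last coordinate -/
def s10e (n : ℕ) (hn : 0 < n) : Fin n := ⟨n - 1, by omega⟩

/-- step on coordinate sets -/
def s10step (n : ℕ) {m : ℕ} (T : Finset (Fin n)) (i : Fin m) : Finset (Fin n) :=
  if h : (i : ℕ) + 1 < n then T.image (Equiv.swap ⟨i, by omega⟩ ⟨i + 1, h⟩)
  else T ∪ Finset.univ.filter (fun t => (t : ℕ) = n - 1)

lemma s10filter_last (hn : 0 < n) :
    Finset.univ.filter (fun t : Fin n => (t : ℕ) = n - 1) = {s10e n hn} := by
  ext t
  simp [s10e, Fin.ext_iff]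

lemma s10B_col (hn : 0 < n) {i : Fin m} (h : ¬ ((i : ℕ) + 1 < n)) :
    LinearMap.range (s10B n i).mulVecLin
      = Submodule.span ℝ {(Pi.single (s10e n hn) 1 : Fin n → ℝ)} := by
  rw [Matrix.range_mulVecLin]
  congr 1
  rw [s10B, if_neg h]
  ext v
  constructor
  · rintro ⟨j, rfl⟩
    have : (Matrix.of fun (r : Fin n) (_ : Fin 1) => if (r : ℕ) = n - 1 then (1:ℝ) else 0).transpose j
        = Pi.single (s10e n hn) 1 := by
      funext r
      simp [Matrix.transpose_apply, Pi.single_apply, s10e, Fin.ext_iff]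
    exact this
  · rintro rfl
    refine ⟨0, ?_⟩
    funext r
    simp [Matrix.transpose_apply, Pi.single_apply, s10e, Fin.ext_iff]

lemma s10step_lem (hn : 0 < n) (T : Finset (Fin n)) (i : Fin m) :
    Submodule.map (Matrix.mulVecLin (s10A n i)) (s10coord T)
        ⊔ LinearMap.range (Matrix.mulVecLin (s10B n i))
      = s10coord (s10step n T i) := by
  by_cases h : (i : ℕ) + 1 < n
  · rw [s10step, dif_pos h, s10A, s10perm, dif_pos h, s10map_coord, s10B, if_pos h]
    simp [Matrix.mulVecLin_zero]
  · rw [s10step, dif_neg h, s10A, s10perm, dif_neg h, s10pmat_one, Matrix.mulVecLin_one,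
      Submodule.map_id, s10B_col hn h, s10filter_last hn, s10coord, s10coord,
      ← Submodule.span_union]
    congr 1
    rw [Finset.coe_union, Finset.coe_singleton, Set.image_union]
    simp

lemma s10reach_eq (hn : 0 < n) (π : List (Fin m)) :
    reach (s10A n) (s10B n) π = s10coord (π.foldl (s10step n) ∅) := by
  rw [reach, ← s10coord_empty]
  generalize (∅ : Finset (Fin n)) = T
  induction π generalizing T with
  | nil => rfl
  | cons i π ih =>
    rw [List.foldl_cons, List.foldl_cons, s10step_lem hn, ih]

def s10phi (T : Finset (Fin n)) : ℕ := ∑ t ∈ T, (n - (t : ℕ))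

lemma s10phi_step (hn : 0 < n) (T : Finset (Fin n)) (i : Fin m) :
    s10phi (s10step n T i) ≤ s10phi T + 1 := by
  rw [s10step]
  by_cases h : (i : ℕ) + 1 < n
  · rw [dif_pos h, s10phi, Finset.sum_image (fun a _ b _ hab => (Equiv.swap _ _).injective hab)]
    set a : Fin n := ⟨i, by omega⟩
    set b : Fin n := ⟨i + 1, h⟩
    calc ∑ t ∈ T, (n - ((Equiv.swap a b t : Fin n) : ℕ))
        ≤ ∑ t ∈ T, ((n - (t : ℕ)) + if t = b then 1 else 0) := by
          refine Finset.sum_le_sum fun t _ => ?_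
          rw [Equiv.swap_apply_def]
          by_cases h1 : t = a
          · have hab : a ≠ b := by simp [a, b, Fin.ext_iff]
            rw [if_pos h1, if_neg (by simp [h1, hab])]
            simp only [b, a, h1]
            omega
          · by_cases h2 : t = b
            · rw [if_neg h1, if_pos h2, if_pos h2]
              simp only [a, b, h2]
              omega
            · rw [if_neg h1, if_neg h2, if_neg h2]
              omega
      _ ≤ s10phi T + 1 := by
          rw [Finset.sum_add_distrib, s10phi]
          gcongr
          rw [Finset.sum_ite_eq' T b (fun _ => 1)]
          split <;> simp
  · rw [dif_neg h, s10filter_last hn, s10phi, s10phi]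
    by_cases hb : s10e n hn ∈ T
    · rw [Finset.union_eq_left.2 (by simpa using hb)]
      omega
    · rw [Finset.union_comm, ← Finset.insert_eq, Finset.sum_insert hb, s10e]
      simp only
      omega

lemma s10phi_foldl (hn : 0 < n) (π : List (Fin m)) (T : Finset (Fin n)) :
    s10phi (π.foldl (s10step n) T) ≤ s10phi T + π.length := by
  induction π generalizing T with
  | nil => simp
  | cons i π ih =>
    rw [List.foldl_cons]
    calc s10phi (π.foldl (s10step n) (s10step n T i)) ≤ s10phi (s10step n T i) + π.length := ih _
      _ ≤ s10phi T + 1 + π.length := by have := s10phi_step hn T i; omega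
      _ = s10phi T + (i :: π).length := by simp; omega

lemma s10phi_univ : s10phi (Finset.univ : Finset (Fin n)) = n * (n + 1) / 2 := by
  have h1 : s10phi (Finset.univ : Finset (Fin n)) = ∑ k ∈ Finset.range n, (n - k) := by
    rw [s10phi, ← Fin.sum_univ_eq_sum_range]
  have h2 : ∑ k ∈ Finset.range n, (n - k) = ∑ k ∈ Finset.range n, (k + 1) := by
    rw [← Finset.sum_range_reflect]
    refine Finset.sum_congr rfl fun k hk => ?_
    have := Finset.mem_range.1 hk
    omega
  have h3 : (∑ k ∈ Finset.range n, k) * 2 = n * (n - 1) := Finset.sum_range_id_mul_two n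
  have h4 : ∑ k ∈ Finset.range n, (k + 1) = (∑ k ∈ Finset.range n, k) + n := by
    rw [Finset.sum_add_distrib]; simp
  have h5 : n * (n + 1) = n * (n - 1) + 2 * n := by
    cases n with
    | zero => rfl
    | succ k =>
      simp only [Nat.succ_sub_one]
      ring
  set s := ∑ k ∈ Finset.range n, k
  set p := n * (n - 1)
  set q := n * (n + 1)
  omega

def s10T (n d : ℕ) : Finset (Fin n) := Finset.univ.filter (fun t => n - d ≤ (t : ℕ))

def s10M (n d j : ℕ) : Finset (Fin n) :=
  Finset.univ.filter (fun t => n - 1 - d ≤ (t : ℕ) ∧ (t : ℕ) ≠ j)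

lemma s10mem_image_swap (a b : Fin n) (S : Finset (Fin n)) (x : Fin n) :
    x ∈ S.image (Equiv.swap a b) ↔ Equiv.swap a b x ∈ S := by
  rw [Finset.mem_image]
  constructor
  · rintro ⟨y, hy, rfl⟩; rwa [Equiv.swap_apply_self]
  · intro hx; exact ⟨_, hx, Equiv.swap_apply_self _ _ _⟩

lemma s10swap_step (hmn : n < m) (d j : ℕ) (hj0 : n - 1 - d ≤ j) (hj1 : j + 1 ≤ n - 1)
    (hn : 0 < n) :
    s10step n (s10M n d j) (⟨j, by omega⟩ : Fin m) = s10M n d (j + 1) := by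
  have hcond : ((⟨j, by omega⟩ : Fin m) : ℕ) + 1 < n := by simp; omega
  rw [s10step, dif_pos hcond]
  ext x
  rw [s10mem_image_swap]
  simp only [s10M, Finset.mem_filter, Finset.mem_univ, true_and]
  rw [Equiv.swap_apply_def]
  by_cases hxa : x = (⟨j, by omega⟩ : Fin n)
  · rw [if_pos hxa]
    have : (x : ℕ) = j := by rw [hxa]
    simp only [this]
    omega
  · rw [if_neg hxa]
    by_cases hxb : x = (⟨j + 1, by omega⟩ : Fin n)
    · rw [if_pos hxb]
      have : (x : ℕ) = j + 1 := by rw [hxb]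
      simp only [this]
      omega
    · rw [if_neg hxb]
      have h1 : (x : ℕ) ≠ j := fun h => hxa (Fin.ext h)
      have h2 : (x : ℕ) ≠ j + 1 := fun h => hxb (Fin.ext h)
      omega

lemma s10add_step (hn : 0 < n) (hmn : n < m) (d : ℕ) (hd : d < n) :
    s10step n (s10M n d (n - 1)) (⟨n - 1, by omega⟩ : Fin m) = s10T n (d + 1) := by
  have hcond : ¬ (((⟨n - 1, by omega⟩ : Fin m) : ℕ) + 1 < n) := by simp; omega
  rw [s10step, dif_neg hcond]
  ext x
  have := x.isLt
  simp only [s10M, s10T, Finset.mem_union, Finset.mem_filter, Finset.mem_univ, true_and]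
  omega

lemma s10M_start (d : ℕ) (hd : d < n) : s10M n d (n - 1 - d) = s10T n d := by
  ext x
  have := x.isLt
  simp only [s10M, s10T, Finset.mem_filter, Finset.mem_univ, true_and]
  omega

lemma s10bubble (hn : 0 < n) (hmn : n < m) (d : ℕ) :
    ∀ k, n - 1 - d + k ≤ n - 1 → ∃ w : List (Fin m), w.length = k ∧
      w.foldl (s10step n) (s10M n d (n - 1 - d)) = s10M n d (n - 1 - d + k) := by
  intro k
  induction k with
  | zero => exact fun _ => ⟨[], rfl, rfl⟩
  | succ k ih =>
    intro hk
    obtain ⟨w, hwl, hwf⟩ := ih (by omega)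
    refine ⟨w ++ [⟨n - 1 - d + k, by omega⟩], by simp [hwl], ?_⟩
    rw [List.foldl_append, hwf, List.foldl_cons, List.foldl_nil,
      s10swap_step hmn d (n - 1 - d + k) (by omega) (by omega) hn]
    rfl

lemma s10stage (hn : 0 < n) (hmn : n < m) (d : ℕ) (hd : d < n) :
    ∃ w : List (Fin m), w.length = d + 1 ∧
      w.foldl (s10step n) (s10T n d) = s10T n (d + 1) := by
  obtain ⟨w, hwl, hwf⟩ := s10bubble hn hmn d d (by omega)
  refine ⟨w ++ [⟨n - 1, by omega⟩], by simp [hwl], ?_⟩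
  rw [List.foldl_append, ← s10M_start d hd, hwf]
  have he : n - 1 - d + d = n - 1 := by omega
  rw [he, List.foldl_cons, List.foldl_nil, s10add_step hn hmn d hd]

lemma s10word (hn : 0 < n) (hmn : n < m) :
    ∀ d ≤ n, ∃ π : List (Fin m), π.length * 2 = d * (d + 1) ∧
      π.foldl (s10step n) ∅ = s10T n d := by
  intro d
  induction d with
  | zero =>
    intro _
    refine ⟨[], by simp, ?_⟩
    rw [List.foldl_nil]
    ext x
    have := x.isLt
    simp only [s10T, Finset.mem_filter, Finset.mem_univ, true_and, Finset.notMem_empty,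
      false_iff]
    omega
  | succ d ih =>
    intro hd
    obtain ⟨π, hπl, hπf⟩ := ih (by omega)
    obtain ⟨w, hwl, hwf⟩ := s10stage hn hmn d (by omega)
    refine ⟨π ++ w, ?_, by rw [List.foldl_append, hπf, hwf]⟩
    have : (d + 1) * ((d + 1) + 1) = d * (d + 1) + 2 * (d + 1) := by ring
    simp only [List.length_append, hwl]
    omega

lemma s10T_univ : s10T n n = Finset.univ := by
  ext x
  simp only [s10T, Finset.mem_filter, Finset.mem_univ, true_and, iff_true]
  omega

end aux


/-- For `m > n ≥ 1` there is a controllable system (with invertible `A_i`) whose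
shortest controllable sequences have length exactly `n(n+1)/2`. -/
theorem stmt10 (n m : ℕ) (hn : 1 ≤ n) (hmn : n < m) :
    ∃ (A : Fin m → Matrix (Fin n) (Fin n) ℝ) (B : Fin m → Matrix (Fin n) (Fin 1) ℝ),
      (∀ i, IsUnit (A i)) ∧
      (⋃ π : List (Fin m), (reach A B π : Set (Fin n → ℝ))) = Set.univ ∧
      (∃ π : List (Fin m), reach A B π = ⊤ ∧ π.length = n * (n + 1) / 2) ∧
      (∀ π : List (Fin m), reach A B π = ⊤ → n * (n + 1) / 2 ≤ π.length) := by
  refine ⟨s10A n, s10B n, fun i => s10_isUnit_pmat _, ?_, ?_, ?_⟩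
  · obtain ⟨π, hlen, hfold⟩ := s10word hn hmn n le_rfl
    have hreach : reach (s10A n) (s10B n) π = ⊤ := by
      rw [s10reach_eq hn, hfold, s10T_univ, s10coord_univ]
    refine Set.eq_univ_iff_forall.2 fun x => Set.mem_iUnion.2 ⟨π, ?_⟩
    rw [hreach]; trivial
  · obtain ⟨π, hlen, hfold⟩ := s10word hn hmn n le_rfl
    refine ⟨π, ?_, ?_⟩
    · rw [s10reach_eq hn, hfold, s10T_univ, s10coord_univ]
    · have h : n * (n + 1) = (n * (n + 1) / 2) * 2 := by
        omega
      omega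
  · intro π hπ
    rw [s10reach_eq hn] at hπ
    have huniv := s10coord_eq_top _ hπ
    have hphi := s10phi_foldl hn π (∅ : Finset (Fin n))
    rw [huniv, s10phi_univ] at hphi
    simpa [s10phi] using hphi
end

section
/- Consider the switched system with n = 3, m = 2, A_1 = [[1,0,0],[0,0,1],[0,1,0]], A_2 = [[0,0,1],[1,0,0],[0,1,0]], B_1 = (1,0,0)^T and B_2 = (0,0,0)^T. Then the switching sequence (1,2,2,1,2,1) (where the first entry is the first applied mode) is a controllable sequence, i.e., R((1,2,2,1,2,1)) = ℝ³, and no switching sequence of length at most 5 is controllable. -/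
def Amat : Fin 2 → Matrix (Fin 3) (Fin 3) ℝ :=
  ![!![1, 0, 0; 0, 0, 1; 0, 1, 0], !![0, 0, 1; 1, 0, 0; 0, 1, 0]]
def Bmat : Fin 2 → Matrix (Fin 3) (Fin 1) ℝ := ![!![1; 0; 0], !![0; 0; 0]]

def bv (j : Fin 3) : Fin 3 → ℝ := Pi.single j 1

def pm : Fin 2 → Fin 3 → Fin 3 := ![![0,2,1], ![1,2,0]]

lemma mulvec_bv (i : Fin 2) (j : Fin 3) :
    (Amat i).mulVecLin (bv j) = bv (pm i j) := by
  fin_cases i <;> fin_cases j <;>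
    (funext k; fin_cases k <;>
      simp [Amat, bv, pm, Matrix.mulVecLin_apply, Matrix.mulVec, dotProduct,
        Pi.single_apply, Fin.sum_univ_three])

lemma rangeB0 : LinearMap.range (Matrix.mulVecLin (Bmat 0)) = Submodule.span ℝ {bv 0} := by
  rw [Matrix.range_mulVecLin]
  congr 1
  ext v
  constructor
  · rintro ⟨c, rfl⟩
    fin_cases c
    simp only [Set.mem_singleton_iff]
    funext k; fin_cases k <;> simp [Bmat, bv, Matrix.transpose_apply, Pi.single_apply, Matrix.vecHead, Matrix.vecTail]
  · rintro rfl
    exact ⟨0, by funext k; fin_cases k <;> simp [Bmat, bv, Matrix.transpose_apply, Pi.single_apply, Matrix.vecHead, Matrix.vecTail]⟩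

lemma rangeB1 : LinearMap.range (Matrix.mulVecLin (Bmat 1)) = ⊥ := by
  have : Bmat 1 = 0 := by
    funext a b; fin_cases a <;> fin_cases b <;> simp [Bmat, Matrix.vecHead, Matrix.vecTail]
  rw [this]
  simp

def fstep (S : Finset (Fin 3)) (i : Fin 2) : Finset (Fin 3) :=
  S.image (pm i) ∪ (if i = 0 then {0} else ∅)

def fs (π : List (Fin 2)) : Finset (Fin 3) := π.foldl fstep ∅

lemma step_eq (S : Finset (Fin 3)) (i : Fin 2) :
    Submodule.map (Matrix.mulVecLin (Amat i))
        (Submodule.span ℝ (bv '' (S : Set (Fin 3)))) ⊔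
      LinearMap.range (Matrix.mulVecLin (Bmat i)) =
    Submodule.span ℝ (bv '' ((fstep S i : Finset (Fin 3)) : Set (Fin 3))) := by
  have himg : (Matrix.mulVecLin (Amat i)) '' (bv '' (S : Set (Fin 3)))
      = bv '' ((pm i) '' (S : Set (Fin 3))) := by
    rw [← Set.image_comp, ← Set.image_comp]
    exact Set.image_congr fun j _ => mulvec_bv i j
  rw [Submodule.map_span, himg]
  have hi : i = 0 ∨ i = 1 := by omega
  rcases hi with rfl | rfl
  · rw [rangeB0]
    have hc : ((fstep S 0 : Finset (Fin 3)) : Set (Fin 3)) = (pm 0 '' (S : Set (Fin 3))) ∪ {0} := by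
      simp [fstep]
    rw [hc, Set.image_union, Set.image_singleton, Submodule.span_union]
  · rw [rangeB1]
    have hc : ((fstep S 1 : Finset (Fin 3)) : Set (Fin 3)) = (pm 1 '' (S : Set (Fin 3))) := by
      simp [fstep]
    rw [hc]
    exact sup_bot_eq _

lemma reach_eq_span (π : List (Fin 2)) :
    reach Amat Bmat π = Submodule.span ℝ (bv '' ((fs π : Finset (Fin 3)) : Set (Fin 3))) := by
  suffices h : ∀ (S : Finset (Fin 3)),
      π.foldl (fun S i => Submodule.map (Matrix.mulVecLin (Amat i)) S ⊔
          LinearMap.range (Matrix.mulVecLin (Bmat i)))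
        (Submodule.span ℝ (bv '' (S : Set (Fin 3))))
      = Submodule.span ℝ (bv '' ((π.foldl fstep S : Finset (Fin 3)) : Set (Fin 3))) by
    have := h ∅
    simpa [reach, fs, Submodule.span_empty] using this
  induction π with
  | nil => intro S; rfl
  | cons i π ih =>
    intro S
    simp only [List.foldl_cons, step_eq S i]
    exact ih (fstep S i)

lemma span_bv_univ : Submodule.span ℝ (bv '' ((Finset.univ : Finset (Fin 3)) : Set (Fin 3))) = ⊤ := by
  have : bv '' ((Finset.univ : Finset (Fin 3)) : Set (Fin 3)) = Set.range bv := by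
    simp [Set.image_univ]
  rw [this]
  have hfun : ⇑(Pi.basisFun ℝ (Fin 3)) = bv := by
    funext j
    simp [bv, Pi.basisFun_apply]
  have hb := (Pi.basisFun ℝ (Fin 3)).span_eq
  rw [hfun] at hb
  exact hb

lemma span_bv_ne_top {S : Finset (Fin 3)} (hS : S ≠ Finset.univ) :
    Submodule.span ℝ (bv '' (S : Set (Fin 3))) ≠ ⊤ := by
  obtain ⟨j, hj⟩ : ∃ j, j ∉ S := by
    by_contra h
    push_neg at h
    exact hS (Finset.eq_univ_iff_forall.2 h)
  intro htop
  have hle : Submodule.span ℝ (bv '' (S : Set (Fin 3))) ≤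
      LinearMap.ker (LinearMap.proj j : (Fin 3 → ℝ) →ₗ[ℝ] ℝ) := by
    rw [Submodule.span_le]
    rintro _ ⟨k, hk, rfl⟩
    have hkj : k ≠ j := fun h => hj (h ▸ hk)
    simp [LinearMap.mem_ker, bv, Pi.single_apply, hkj]
  have : (bv j) j = 0 := by
    have hmem : bv j ∈ Submodule.span ℝ (bv '' (S : Set (Fin 3))) := htop ▸ Submodule.mem_top
    simpa using hle hmem
  simp [bv] at this

lemma fstep_univ : ∀ i : Fin 2, fstep Finset.univ i = Finset.univ := by decide

lemma fs_append_univ (π ρ : List (Fin 2)) (h : fs π = Finset.univ) :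
    fs (π ++ ρ) = Finset.univ := by
  rw [fs, List.foldl_append]
  show List.foldl fstep (fs π) ρ = Finset.univ
  rw [h]
  induction ρ with
  | nil => rfl
  | cons i ρ ih => rw [List.foldl_cons, fstep_univ i]; exact ih

lemma fs_len5 (π : List (Fin 2)) (h : π.length = 5) : fs π ≠ Finset.univ := by
  match π, h with
  | [a, b, c, d, e], _ => revert a b c d e; decide


/-- For the explicit example with `n = 3`, `m = 2`, the sequence `(1,2,2,1,2,1)`
is controllable and no sequence of length at most `5` is controllable. -/
theorem stmt11 :
    letI A : Fin 2 → Matrix (Fin 3) (Fin 3) ℝ :=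
      ![!![1, 0, 0; 0, 0, 1; 0, 1, 0], !![0, 0, 1; 1, 0, 0; 0, 1, 0]]
    letI B : Fin 2 → Matrix (Fin 3) (Fin 1) ℝ :=
      ![!![1; 0; 0], !![0; 0; 0]]
    reach A B [0, 1, 1, 0, 1, 0] = ⊤ ∧
      ∀ π : List (Fin 2), π.length ≤ 5 → reach A B π ≠ ⊤ := by
  show reach Amat Bmat [0, 1, 1, 0, 1, 0] = ⊤ ∧
      ∀ π : List (Fin 2), π.length ≤ 5 → reach Amat Bmat π ≠ ⊤
  constructor
  · rw [reach_eq_span]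
    have h6 : fs [0, 1, 1, 0, 1, 0] = Finset.univ := by decide
    rw [h6, span_bv_univ]
  · intro π hlen h
    rw [reach_eq_span] at h
    by_cases hu : fs π = Finset.univ
    · have hρ : fs (π ++ List.replicate (5 - π.length) 0) = Finset.univ :=
        fs_append_univ π _ hu
      have hlen5 : (π ++ List.replicate (5 - π.length) 0).length = 5 := by
        simp [List.length_append, List.length_replicate]
        omega
      exact fs_len5 _ hlen5 hρ
    · exact span_bv_ne_top hu h
end

section
/- Let 1 ≤ r < n and let M ∈ ℝ^{n×n} be invertible. Write M in block form M = [[A, B],[C, D]] with A ∈ ℝ^{r×r}, B ∈ ℝ^{r×(n-r)}, C ∈ ℝ^{(n-r)×r}, D ∈ ℝ^{(n-r)×(n-r)}. For P ∈ ℝ^{r×(n-r)}, the bottom-right (n-r)×(n-r) block of Q^{-1} M Q, where Q = [[Id_r, P],[0, Id_{n-r}]], equals CP + D, and the set M = { P ∈ ℝ^{r×(n-r)} : CP + D is invertible } is open and dense in ℝ^{r×(n-r)}. -/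
open Module in
/-- If `range c ⊔ range d = ⊤` then a suitable `p` makes `c ∘ p + d` surjective. -/
private lemma aux_exists_proj {V W : Type*} [AddCommGroup V] [Module ℝ V]
    [FiniteDimensional ℝ V] [AddCommGroup W] [Module ℝ W] (c : W →ₗ[ℝ] V) :
    ∀ (k : ℕ) (d : V →ₗ[ℝ] V),
      finrank ℝ V ≤ finrank ℝ (LinearMap.range d) + k →
      LinearMap.range c ⊔ LinearMap.range d = ⊤ →
      ∃ p : V →ₗ[ℝ] W, Function.Surjective (c ∘ₗ p + d) := by
  intro k
  induction k with
  | zero =>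
    intro d hk htop
    have hd : LinearMap.range d = ⊤ :=
      Submodule.eq_top_of_finrank_eq
        (le_antisymm (Submodule.finrank_le _) (by simpa using hk))
    refine ⟨0, ?_⟩
    have h0 : c ∘ₗ (0 : V →ₗ[ℝ] W) + d = d := by simp
    rw [h0]
    exact LinearMap.range_eq_top.mp hd
  | succ k ih =>
    intro d hk htop
    by_cases hd : LinearMap.range d = ⊤
    · refine ⟨0, ?_⟩
      have h0 : c ∘ₗ (0 : V →ₗ[ℝ] W) + d = d := by simp
      rw [h0]
      exact LinearMap.range_eq_top.mp hd
    · have hcd : ¬ LinearMap.range c ≤ LinearMap.range d := by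
        intro h
        apply hd
        rw [eq_top_iff, ← htop]
        exact sup_le h le_rfl
      obtain ⟨v, hvc, hvd⟩ := SetLike.not_le_iff_exists.mp hcd
      obtain ⟨w, hw⟩ := hvc
      have hdninj : ¬ Function.Injective d := by
        intro h
        exact hd (LinearMap.range_eq_top.mpr
          ((LinearMap.injective_iff_surjective).mp h))
      obtain ⟨x₀, hx₀mem, hx₀⟩ :=
        (Submodule.ne_bot_iff _).mp (fun h => hdninj (LinearMap.ker_eq_bot.mp h))
      have hdx₀ : d x₀ = 0 := hx₀mem
      obtain ⟨U, hU⟩ := (Submodule.span ℝ ({x₀} : Set V)).exists_isCompl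
      let φ : V →ₗ[ℝ] ℝ :=
        (LinearEquiv.coord ℝ V x₀ hx₀).toLinearMap ∘ₗ
          Submodule.linearProjOfIsCompl _ U hU
      have hφx₀ : φ x₀ = 1 := by
        have h1 : Submodule.linearProjOfIsCompl _ U hU x₀
            = ⟨x₀, Submodule.mem_span_singleton_self x₀⟩ :=
          Submodule.linearProjOfIsCompl_apply_left hU
            ⟨x₀, Submodule.mem_span_singleton_self x₀⟩
        simp [φ, h1, LinearEquiv.coord_self]
      let p₁ : V →ₗ[ℝ] W := (LinearMap.toSpanSingleton ℝ W w) ∘ₗ φ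
      have hp₁ : ∀ x, c (p₁ x) = φ x • v := fun x => by
        simp [p₁, LinearMap.toSpanSingleton_apply, map_smul, hw]
      set d' := d + c ∘ₗ p₁ with hd'def
      have hd'x : ∀ x, d' x = d x + φ x • v := fun x => by
        simp [hd'def, hp₁ x]
      have hvmem : v ∈ LinearMap.range d' := by
        refine ⟨x₀, ?_⟩
        rw [hd'x, hdx₀, hφx₀, one_smul, zero_add]
      have hsub : LinearMap.range d ≤ LinearMap.range d' := by
        rintro y ⟨x, rfl⟩
        refine ⟨x - φ x • x₀, ?_⟩
        rw [hd'x]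
        simp [map_sub, map_smul, hdx₀, hφx₀, mul_one]
      have hlt : LinearMap.range d < LinearMap.range d' :=
        lt_of_le_of_ne hsub (fun h => hvd (h ▸ hvmem))
      have hfr : finrank ℝ (LinearMap.range d) < finrank ℝ (LinearMap.range d') :=
        Submodule.finrank_lt_finrank_of_lt hlt
      have hk' : finrank ℝ V ≤ finrank ℝ (LinearMap.range d') + k := by omega
      have htop' : LinearMap.range c ⊔ LinearMap.range d' = ⊤ := by
        rw [eq_top_iff, ← htop]
        exact sup_le_sup_left hsub _
      obtain ⟨p', hp'⟩ := ih d' hk' htop'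
      refine ⟨p' + p₁, ?_⟩
      have heq : c ∘ₗ (p' + p₁) + d = c ∘ₗ p' + d' := by
        ext x
        simp only [LinearMap.add_apply, LinearMap.comp_apply, map_add, hd'def]
        abel
      rw [heq]
      exact hp'

open Module in
private lemma aux_exists_unit {s r : ℕ} (C : Matrix (Fin s) (Fin r) ℝ)
    (D : Matrix (Fin s) (Fin s) ℝ)
    (h : LinearMap.range C.mulVecLin ⊔ LinearMap.range D.mulVecLin = ⊤) :
    ∃ P : Matrix (Fin r) (Fin s) ℝ, IsUnit (C * P + D) := by
  obtain ⟨p, hp⟩ := aux_exists_proj C.mulVecLin (finrank ℝ (Fin s → ℝ)) D.mulVecLin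
    (Nat.le_add_left _ _) h
  refine ⟨LinearMap.toMatrix' p, ?_⟩
  have hml : (C * LinearMap.toMatrix' p + D).mulVecLin
      = C.mulVecLin ∘ₗ p + D.mulVecLin := by
    have hq : (LinearMap.toMatrix' p).mulVecLin = p := by
      rw [← Matrix.toLin'_apply', Matrix.toLin'_toMatrix']
    rw [Matrix.mulVecLin_add, Matrix.mulVecLin_mul, hq]
  rw [← Matrix.mulVec_surjective_iff_isUnit]
  have : (Matrix.mulVec (C * LinearMap.toMatrix' p + D))
      = ⇑((C * LinearMap.toMatrix' p + D).mulVecLin) := rfl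
  rw [this, hml]
  exact hp

/-- For an invertible matrix `M`, conjugating by `Q = [[Id, P],[0, Id]]` has
bottom-right block `CP + D`, and the set of `P` making this block invertible is
open and dense. -/
theorem stmt12 (n r : ℕ) (hr : 1 ≤ r) (hrn : r < n)
    (M : Matrix (Fin r ⊕ Fin (n - r)) (Fin r ⊕ Fin (n - r)) ℝ)
    (hM : IsUnit M) :
    (∀ P : Matrix (Fin r) (Fin (n - r)) ℝ,
      ((Matrix.fromBlocks 1 P 0 1)⁻¹ * M * Matrix.fromBlocks 1 P 0 1).toBlocks₂₂
        = M.toBlocks₂₁ * P + M.toBlocks₂₂) ∧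
    IsOpen {P : Matrix (Fin r) (Fin (n - r)) ℝ |
      IsUnit (M.toBlocks₂₁ * P + M.toBlocks₂₂)} ∧
    Dense {P : Matrix (Fin r) (Fin (n - r)) ℝ |
      IsUnit (M.toBlocks₂₁ * P + M.toBlocks₂₂)} := by
  set C := M.toBlocks₂₁ with hC
  set D := M.toBlocks₂₂ with hD
  have hQinv : ∀ P : Matrix (Fin r) (Fin (n - r)) ℝ,
      (Matrix.fromBlocks 1 P 0 1)⁻¹ = (Matrix.fromBlocks 1 (-P) 0 1 :
        Matrix (Fin r ⊕ Fin (n - r)) (Fin r ⊕ Fin (n - r)) ℝ) := by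
    intro P
    apply Matrix.inv_eq_right_inv
    simp [Matrix.fromBlocks_multiply, Matrix.fromBlocks_one]
  refine ⟨?_, ?_, ?_⟩
  · intro P
    rw [hQinv]
    conv_lhs => rw [← Matrix.fromBlocks_toBlocks M]
    simp [Matrix.fromBlocks_multiply, ← hC, ← hD]
  · have hcont : Continuous fun P : Matrix (Fin r) (Fin (n - r)) ℝ =>
        (C * P + D).det :=
      Continuous.matrix_det
        ((continuous_const.matrix_mul continuous_id).add continuous_const)
    have hset : {P : Matrix (Fin r) (Fin (n - r)) ℝ | IsUnit (C * P + D)}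
        = (fun P => (C * P + D).det) ⁻¹' {(0 : ℝ)}ᶜ := by
      ext P
      simp [Matrix.isUnit_iff_isUnit_det, isUnit_iff_ne_zero]
    rw [hset]
    exact isOpen_compl_singleton.preimage hcont
  · -- density
    have hsup : LinearMap.range C.mulVecLin ⊔ LinearMap.range D.mulVecLin = ⊤ := by
      rw [eq_top_iff]
      rintro y -
      obtain ⟨z, hz⟩ := (Matrix.mulVec_surjective_iff_isUnit.mpr hM) (Sum.elim 0 y)
      have hM' : M = Matrix.fromBlocks M.toBlocks₁₁ M.toBlocks₁₂ C D :=
        (Matrix.fromBlocks_toBlocks M).symm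
      rw [hM', Matrix.fromBlocks_mulVec] at hz
      have h2 : C.mulVec (z ∘ Sum.inl) + D.mulVec (z ∘ Sum.inr) = y := by
        have := congrArg (· ∘ Sum.inr) hz
        simpa using this
      exact Submodule.mem_sup.mpr
        ⟨C.mulVec (z ∘ Sum.inl), ⟨z ∘ Sum.inl, rfl⟩,
         D.mulVec (z ∘ Sum.inr), ⟨z ∘ Sum.inr, rfl⟩, h2⟩
    obtain ⟨P₁, hP₁⟩ := aux_exists_unit C D hsup
    intro P₀
    set E := C * P₁ + D with hE
    set F := C * P₀ + D with hF
    set G : Matrix (Fin (n - r)) (Fin (n - r)) (Polynomial ℝ) :=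
      Matrix.of fun i j => Polynomial.C (F i j) + Polynomial.X * Polynomial.C ((E - F) i j)
      with hG
    set p := G.det with hpdef
    have key : ∀ t : ℝ, p.eval t = (F + t • (E - F)).det := by
      intro t
      have h1 := RingHom.map_det (Polynomial.evalRingHom t) G
      have h2 : G.map (Polynomial.evalRingHom t) = F + t • (E - F) := by
        ext i j
        simp [hG, Matrix.map_apply, mul_comm]
      rw [hpdef]
      calc Polynomial.eval t G.det = (Polynomial.evalRingHom t) G.det := rfl
        _ = (G.map (Polynomial.evalRingHom t)).det := h1
        _ = (F + t • (E - F)).det := by rw [h2]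
    have hp1 : p.eval 1 = E.det := by
      rw [key 1, one_smul]
      congr 1
      abel
    have hpne : p ≠ 0 := by
      intro h
      have hEdet : E.det ≠ 0 :=
        isUnit_iff_ne_zero.mp ((Matrix.isUnit_iff_isUnit_det E).mp hP₁)
      rw [h] at hp1
      simp at hp1
      exact hEdet hp1.symm
    have hfin : Set.Finite {t : ℝ | p.IsRoot t} := Polynomial.finite_setOf_isRoot hpne
    have hdense : Dense {t : ℝ | p.IsRoot t}ᶜ := hfin.countable.dense_compl ℝ
    have hfreq : ∃ᶠ t in nhds (0 : ℝ), ¬ p.IsRoot t := by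
      have := mem_closure_iff_frequently.mp (hdense 0)
      simpa using this
    have hg : Filter.Tendsto (fun t : ℝ => P₀ + t • (P₁ - P₀)) (nhds 0) (nhds P₀) := by
      have hc : Continuous fun t : ℝ => P₀ + t • (P₁ - P₀) :=
        continuous_const.add (continuous_id.smul continuous_const)
      have := hc.tendsto 0
      simpa using this
    apply mem_closure_of_frequently_of_tendsto _ hg
    refine hfreq.mono ?_
    intro t ht
    have heq : C * (P₀ + t • (P₁ - P₀)) + D = F + t • (E - F) := by
      rw [hE, hF]
      rw [Matrix.mul_add, Matrix.mul_smul, Matrix.mul_sub]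
      abel
    show IsUnit (C * (P₀ + t • (P₁ - P₀)) + D)
    rw [heq, Matrix.isUnit_iff_isUnit_det, isUnit_iff_ne_zero, ← key t]
    exact ht
end

section
/- Let 1 ≤ r < n, C ∈ ℝ^{(n-r)×r} and D ∈ ℝ^{(n-r)×(n-r)}. If the (n-r)×n matrix (C D) obtained by horizontal concatenation has rank n - r, then there exists P ∈ ℝ^{r×(n-r)} such that CP + D is invertible. -/
open LinearMap Submodule

lemma aux_phi {r m : ℕ} (g : (Fin r → ℝ) →ₗ[ℝ] (Fin m → ℝ))
    (h : (Fin m → ℝ) →ₗ[ℝ] (Fin m → ℝ))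
    (hsup : LinearMap.range g ⊔ LinearMap.range h = ⊤) :
    ∃ φ : (Fin m → ℝ) →ₗ[ℝ] (Fin r → ℝ), Function.Injective (g ∘ₗ φ + h) := by
  classical
  set rg := LinearMap.range g with hrg
  set rh := LinearMap.range h with hrh
  -- complement of rg ⊓ rh inside rg
  obtain ⟨q, hq⟩ := Submodule.exists_isCompl ((rg ⊓ rh).comap rg.subtype)
  set K := q.map rg.subtype with hK
  have hKle : K ≤ rg := Submodule.map_subtype_le _ _
  -- K ⊔ rh = ⊤
  have hKsup : K ⊔ rh = ⊤ := by
    have h1 : K ⊔ ((rg ⊓ rh).comap rg.subtype).map rg.subtype = rg := by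
      rw [hK, ← Submodule.map_sup, hq.symm.sup_eq_top, Submodule.map_top,
        Submodule.range_subtype]
    have h2 : ((rg ⊓ rh).comap rg.subtype).map rg.subtype ≤ rh := by
      refine le_trans (Submodule.map_comap_le _ _) inf_le_right
    rw [← hsup, ← h1, sup_assoc]
    exact congrArg (K ⊔ ·) (by rw [sup_eq_right.mpr h2])
  -- K ⊓ rh = ⊥
  have hKinf : K ⊓ rh = ⊥ := by
    rw [eq_bot_iff]
    rintro x ⟨hxK, hxrh⟩
    obtain ⟨y, hyq, rfl⟩ := hxK
    have hy : y ∈ (rg ⊓ rh).comap rg.subtype := by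
      simp only [Submodule.mem_comap]
      exact ⟨y.2, hxrh⟩
    have : y ∈ ((rg ⊓ rh).comap rg.subtype) ⊓ q := ⟨hy, hyq⟩
    rw [hq.inf_eq_bot] at this
    rw [Submodule.mem_bot] at this
    simp [this]
  have hcompl : IsCompl K rh := ⟨disjoint_iff.mpr hKinf, codisjoint_iff.mpr hKsup⟩
  -- finrank equality for ker h ≃ K
  have hfr : Module.finrank ℝ (LinearMap.ker h) = Module.finrank ℝ K := by
    have h1 := Submodule.finrank_add_eq_of_isCompl hcompl
    have h2 := LinearMap.finrank_range_add_finrank_ker h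
    rw [← hrh] at h2
    omega
  let e : LinearMap.ker h ≃ₗ[ℝ] K := LinearEquiv.ofFinrankEq _ _ hfr
  -- complement of ker h
  obtain ⟨V₁, hV₁⟩ := Submodule.exists_isCompl (LinearMap.ker h)
  let π := (LinearMap.ker h).linearProjOfIsCompl V₁ hV₁
  -- section of g over K
  obtain ⟨σ, hσ⟩ := g.rangeRestrict.exists_rightInverse_of_surjective
    (LinearMap.range_eq_top.mpr g.surjective_rangeRestrict)
  have hgσ : ∀ y : rg, g (σ y) = (y : Fin m → ℝ) := by
    intro y
    have := congrArg (fun f => f y) hσ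
    simpa [LinearMap.rangeRestrict] using congrArg Subtype.val this
  let s : K →ₗ[ℝ] (Fin r → ℝ) := σ ∘ₗ Submodule.inclusion hKle
  have hgs : ∀ k : K, g (s k) = (k : Fin m → ℝ) := fun k => hgσ _
  set φ : (Fin m → ℝ) →ₗ[ℝ] (Fin r → ℝ) := s ∘ₗ e.toLinearMap ∘ₗ π with hφ
  refine ⟨φ, ?_⟩
  set f := g ∘ₗ φ + h with hf
  have hsurj : Function.Surjective f := by
    rw [← LinearMap.range_eq_top, eq_top_iff, ← hKsup]
    refine sup_le ?_ ?_
    · rintro k hk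
      refine ⟨(e.symm ⟨k, hk⟩ : LinearMap.ker h), ?_⟩
      have hmem : ((e.symm ⟨k, hk⟩ : LinearMap.ker h) : Fin m → ℝ) ∈ LinearMap.ker h :=
        (e.symm ⟨k, hk⟩).2
      have hπ : π ((e.symm ⟨k, hk⟩ : LinearMap.ker h) : Fin m → ℝ) = e.symm ⟨k, hk⟩ :=
        Submodule.linearProjOfIsCompl_apply_left hV₁ (e.symm ⟨k, hk⟩)
      simp only [hf, LinearMap.add_apply, LinearMap.comp_apply, hφ]
      rw [hπ]
      have hh0 : h ((e.symm ⟨k, hk⟩ : LinearMap.ker h) : Fin m → ℝ) = 0 := hmem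
      rw [hh0, add_zero]
      simp only [LinearEquiv.coe_coe, LinearEquiv.apply_symm_apply]
      exact hgs ⟨k, hk⟩
    · rintro w ⟨v, rfl⟩
      obtain ⟨v₀, v₁, hv₀, hv₁, rfl⟩ : ∃ v₀ v₁, v₀ ∈ LinearMap.ker h ∧ v₁ ∈ V₁ ∧ v₀ + v₁ = v := by
        have : v ∈ (LinearMap.ker h) ⊔ V₁ := by rw [hV₁.sup_eq_top]; trivial
        obtain ⟨v₀, hv₀, v₁, hv₁, hvv⟩ := Submodule.mem_sup.mp this
        exact ⟨v₀, v₁, hv₀, hv₁, hvv⟩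
      refine ⟨v₁, ?_⟩
      have hπ1 : π v₁ = 0 := Submodule.projectionOnto_apply_of_mem_right hV₁ hv₁
      simp only [hf, LinearMap.add_apply, LinearMap.comp_apply, hφ, hπ1]
      rw [map_add]
      have : h v₀ = 0 := hv₀
      rw [this, zero_add]
      simp
  exact (LinearMap.injective_iff_surjective).mpr hsurj

/-- If the horizontal concatenation `(C D)` has full row rank `n - r`, then some
`P` makes `CP + D` invertible. -/
theorem stmt13 (n r : ℕ) (hr : 1 ≤ r) (hrn : r < n)
    (C : Matrix (Fin (n - r)) (Fin r) ℝ) (D : Matrix (Fin (n - r)) (Fin (n - r)) ℝ)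
    (hrank : (Matrix.fromCols C D).rank = n - r) :
    ∃ P : Matrix (Fin r) (Fin (n - r)) ℝ, IsUnit (C * P + D) := by
  classical
  set g := C.mulVecLin with hg
  set h := D.mulVecLin with hh
  have hsup : LinearMap.range g ⊔ LinearMap.range h = ⊤ := by
    have htop : LinearMap.range (Matrix.fromCols C D).mulVecLin = ⊤ := by
      apply Submodule.eq_top_of_finrank_eq
      rw [← Matrix.rank, hrank]
      simp
    rw [eq_top_iff, ← htop]
    rintro x ⟨v, rfl⟩
    have hvv : (Matrix.fromCols C D).mulVecLin v
        = g (v ∘ Sum.inl) + h (v ∘ Sum.inr) := by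
      rw [Matrix.mulVecLin_apply, ← Sum.elim_comp_inl_inr v,
        Matrix.fromCols_mulVec_sumElim]
      rfl
    rw [hvv]
    exact Submodule.add_mem _ (Submodule.mem_sup_left (LinearMap.mem_range_self g _))
      (Submodule.mem_sup_right (LinearMap.mem_range_self h _))
  obtain ⟨φ, hφ⟩ := aux_phi g h hsup
  refine ⟨LinearMap.toMatrix' φ, ?_⟩
  rw [← Matrix.mulVec_injective_iff_isUnit]
  have : (C * LinearMap.toMatrix' φ + D).mulVecLin = g ∘ₗ φ + h := by
    rw [Matrix.mulVecLin_add, Matrix.mulVecLin_mul]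
    congr 1
    rw [hg]
    congr 1
    exact Matrix.toLin'_toMatrix' φ
  intro a b hab
  rw [← Matrix.mulVecLin_apply, ← Matrix.mulVecLin_apply, this] at hab
  exact hφ hab
end

section
/- Let 1 ≤ r < n. Assume every matrix A_i (i = 1,…,m) is invertible and every matrix B_i has rank at least r. If the switched linear control system is controllable, then there exists a controllable switching sequence of length at most (n-r+1)(n-r)/2 + 1. -/
namespace Stmt14Aux

open Module Submodule Matrix

variable {n m : ℕ} (A : Fin m → Matrix (Fin n) (Fin n) ℝ) {q : Fin m → ℕ}
  (B : ∀ i, Matrix (Fin n) (Fin (q i)) ℝ)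

/-- Product matrix along a word (first letter applied first). -/
def Pm (π : List (Fin m)) : Matrix (Fin n) (Fin n) ℝ := π.foldl (fun M i => A i * M) 1

lemma foldl_mul_eq (π : List (Fin m)) :
    ∀ M : Matrix (Fin n) (Fin n) ℝ, π.foldl (fun M i => A i * M) M = Pm A π * M := by
  induction π with
  | nil => intro M; simp [Pm]
  | cons i π ih =>
      intro M
      show π.foldl _ (A i * M) = Pm A (i :: π) * M
      have h1 : Pm A (i :: π) = Pm A π * A i := by
        show π.foldl _ (A i * 1) = _
        rw [ih (A i * 1), mul_one]
      rw [ih (A i * M), h1, mul_assoc]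

lemma Pm_cons (i : Fin m) (π : List (Fin m)) : Pm A (i :: π) = Pm A π * A i := by
  show π.foldl _ (A i * 1) = _
  rw [foldl_mul_eq, mul_one]

lemma Pm_isUnit (hA : ∀ i, IsUnit (A i)) (π : List (Fin m)) : IsUnit (Pm A π) := by
  induction π with
  | nil => simpa [Pm] using isUnit_one
  | cons i π ih => rw [Pm_cons]; exact ih.mul (hA i)

lemma foldl_step (u : List (Fin m)) :
    ∀ S : Submodule ℝ (Fin n → ℝ),
      u.foldl (fun S i =>
        Submodule.map (Matrix.mulVecLin (A i)) S ⊔ LinearMap.range (Matrix.mulVecLin (B i))) S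
      = Submodule.map (Pm A u).mulVecLin S ⊔ reach A B u := by
  induction u with
  | nil => intro S; simp [reach, Pm, Matrix.mulVecLin_one]
  | cons i u ih =>
      intro S
      show u.foldl _ (Submodule.map (A i).mulVecLin S ⊔ LinearMap.range (B i).mulVecLin) = _
      rw [ih]
      have h2 : reach A B (i :: u)
          = Submodule.map (Pm A u).mulVecLin (LinearMap.range (B i).mulVecLin) ⊔ reach A B u := by
        show u.foldl _ (Submodule.map (A i).mulVecLin ⊥ ⊔ LinearMap.range (B i).mulVecLin) = _
        rw [ih]
        simp
      rw [h2, Pm_cons, Matrix.mulVecLin_mul, Submodule.map_sup, Submodule.map_comp, sup_assoc]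

lemma reach_append (v u : List (Fin m)) :
    reach A B (v ++ u) = Submodule.map (Pm A u).mulVecLin (reach A B v) ⊔ reach A B u := by
  show (v ++ u).foldl _ ⊥ = _
  rw [List.foldl_append]
  exact foldl_step A B u _

lemma reach_nil : reach A B [] = ⊥ := rfl

lemma reach_singleton (i : Fin m) :
    reach A B [i] = LinearMap.range (B i).mulVecLin := by
  show Submodule.map (A i).mulVecLin ⊥ ⊔ LinearMap.range (B i).mulVecLin = _
  simp

lemma reach_concat (v : List (Fin m)) (i : Fin m) :
    reach A B (v ++ [i])
      = Submodule.map (A i).mulVecLin (reach A B v) ⊔ LinearMap.range (B i).mulVecLin := by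
  rw [reach_append, reach_singleton]
  have h : Pm A [i] = A i := by
    show A i * 1 = A i
    rw [mul_one]
  rw [h]

/-- Linear equivalence from a unit matrix. -/
noncomputable def uEquiv {M : Matrix (Fin n) (Fin n) ℝ} (h : IsUnit M) :
    (Fin n → ℝ) ≃ₗ[ℝ] (Fin n → ℝ) :=
  LinearEquiv.ofLinear M.mulVecLin (↑h.unit⁻¹ : Matrix (Fin n) (Fin n) ℝ).mulVecLin
    (by rw [← Matrix.mulVecLin_mul, h.mul_val_inv, Matrix.mulVecLin_one])
    (by rw [← Matrix.mulVecLin_mul, h.val_inv_mul, Matrix.mulVecLin_one])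

lemma uEquiv_coe {M : Matrix (Fin n) (Fin n) ℝ} (h : IsUnit M) :
    (uEquiv h : (Fin n → ℝ) →ₗ[ℝ] (Fin n → ℝ)) = M.mulVecLin := rfl

lemma finrank_map_unit {M : Matrix (Fin n) (Fin n) ℝ} (h : IsUnit M)
    (S : Submodule ℝ (Fin n → ℝ)) :
    finrank ℝ (Submodule.map M.mulVecLin S) = finrank ℝ S := by
  have := LinearEquiv.finrank_map_eq (uEquiv h) S
  rwa [uEquiv_coe] at this

lemma mulVecLin_injective {M : Matrix (Fin n) (Fin n) ℝ} (h : IsUnit M) :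
    Function.Injective M.mulVecLin := by
  have := (uEquiv h).injective
  rwa [show ⇑(uEquiv h) = ⇑M.mulVecLin from rfl] at this

lemma map_unit_top {M : Matrix (Fin n) (Fin n) ℝ} (h : IsUnit M) :
    Submodule.map M.mulVecLin (⊤ : Submodule ℝ (Fin n → ℝ)) = ⊤ := by
  rw [Submodule.map_top, LinearMap.range_eq_top]
  have := (uEquiv h).surjective
  rwa [show ⇑(uEquiv h) = ⇑M.mulVecLin from rfl] at this

/-- `W L` : the span of all reach spaces of words of length at most `L`. -/
noncomputable def W (L : ℕ) : Submodule ℝ (Fin n → ℝ) :=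
  ⨆ (v : List (Fin m)) (_ : v.length ≤ L), reach A B v

lemma reach_le_W {v : List (Fin m)} {L : ℕ} (hv : v.length ≤ L) :
    reach A B v ≤ W A B L :=
  le_iSup₂ (f := fun (v : List (Fin m)) (_ : v.length ≤ L) => reach A B v) v hv

lemma W_le_iff {L : ℕ} {S : Submodule ℝ (Fin n → ℝ)} :
    W A B L ≤ S ↔ ∀ v : List (Fin m), v.length ≤ L → reach A B v ≤ S :=
  iSup₂_le_iff

lemma W_mono {L₁ L₂ : ℕ} (h : L₁ ≤ L₂) : W A B L₁ ≤ W A B L₂ := by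
  rw [W_le_iff]
  intro v hv
  exact reach_le_W A B (hv.trans h)

lemma map_W_le {L : ℕ} (f : (Fin n → ℝ) →ₗ[ℝ] (Fin n → ℝ)) {S : Submodule ℝ (Fin n → ℝ)}
    (h : ∀ v : List (Fin m), v.length ≤ L → Submodule.map f (reach A B v) ≤ S) :
    Submodule.map f (W A B L) ≤ S := by
  rw [W, Submodule.map_iSup]
  apply iSup_le
  intro v
  rw [Submodule.map_iSup]
  exact iSup_le fun hv => h v hv

lemma invariant_top
    (hctrl : (⋃ π : List (Fin m), (reach A B π : Set (Fin n → ℝ))) = Set.univ) {S : Submodule ℝ (Fin n → ℝ)}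
    (hS : ∀ i, Submodule.map (A i).mulVecLin S ⊔ LinearMap.range (B i).mulVecLin ≤ S) :
    S = ⊤ := by
  have h1 : ∀ π : List (Fin m), reach A B π ≤ S := by
    intro π
    induction π using List.reverseRecOn with
    | nil => rw [reach_nil]; exact bot_le
    | append_singleton v i ih =>
        rw [reach_concat]
        exact le_trans (sup_le_sup_right (Submodule.map_mono ih) _) (hS i)
  rw [eq_top_iff']
  intro x
  have hx : x ∈ Set.univ := trivial
  rw [← hctrl] at hx
  rcases Set.mem_iUnion.mp hx with ⟨π, hπ⟩
  exact h1 π hπ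

lemma W_stuck
    (hctrl : (⋃ π : List (Fin m), (reach A B π : Set (Fin n → ℝ))) = Set.univ) {L : ℕ} (h : W A B (L + 1) ≤ W A B L) : W A B L = ⊤ := by
  apply invariant_top A B hctrl
  intro i
  have h1 : Submodule.map (A i).mulVecLin (W A B L) ≤ W A B (L + 1) := by
    apply map_W_le
    intro v hv
    have h2 : Submodule.map (A i).mulVecLin (reach A B v) ≤ reach A B (v ++ [i]) := by
      rw [reach_concat]; exact le_sup_left
    exact h2.trans (reach_le_W A B (by simp; omega))
  have h2 : LinearMap.range (B i).mulVecLin ≤ W A B (L + 1) := by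
    rw [← reach_singleton A B i]
    exact reach_le_W A B (by simp)
  exact sup_le (h1.trans h) (h2.trans h)

lemma W_growth
    (hctrl : (⋃ π : List (Fin m), (reach A B π : Set (Fin n → ℝ))) = Set.univ) {a b : ℕ} (hab : a ≤ b) (htop : W A B b ≠ ⊤) :
    finrank ℝ (W A B a) + (b - a) ≤ finrank ℝ (W A B b) := by
  induction b, hab using Nat.le_induction with
  | base => simp
  | succ b hab ih =>
      have hb : W A B b ≠ ⊤ := by
        intro he
        exact htop (top_le_iff.mp (he ▸ W_mono A B (Nat.le_succ b)))
      have hlt : W A B b < W A B (b + 1) := by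
        apply lt_of_le_of_ne (W_mono A B (Nat.le_succ b))
        intro he
        exact hb (W_stuck A B hctrl (le_of_eq he.symm))
      have h1 := Submodule.finrank_lt_finrank_of_lt hlt
      have h2 := ih hb
      omega

lemma r_le_finrank_W1 {r : ℕ} (hm : 1 ≤ m) (hB : ∀ i, r ≤ (B i).rank) :
    r ≤ finrank ℝ (W A B 1) := by
  have h1 : reach A B [⟨0, hm⟩] ≤ W A B 1 := reach_le_W A B (by simp)
  rw [reach_singleton] at h1
  exact le_trans (hB ⟨0, hm⟩) (Submodule.finrank_mono h1)

/-- Key step: a word whose reach has dimension `d < n` can be modified (keeping its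
tail and prepending at most `d - r + 1` letters) to strictly increase the dimension. -/
lemma main_step
    (hctrl : (⋃ π : List (Fin m), (reach A B π : Set (Fin n → ℝ))) = Set.univ)
    {r : ℕ} (hm : 1 ≤ m) (hA : ∀ i, IsUnit (A i)) (hB : ∀ i, r ≤ (B i).rank)
    (w : List (Fin m)) (hw : w ≠ [])
    (hd_lt : finrank ℝ (reach A B w) < n) (hd_ge : r ≤ finrank ℝ (reach A B w)) :
    ∃ (x' : Fin m) (v : List (Fin m)), v.length ≤ finrank ℝ (reach A B w) - r + 1 ∧
      finrank ℝ (reach A B w) + 1 ≤ finrank ℝ (reach A B (v ++ x' :: w.tail)) := by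
  obtain ⟨x, w₁, rfl⟩ := List.exists_cons_of_ne_nil hw
  simp only [List.tail_cons]
  by_contra hcon
  push_neg at hcon
  set d := finrank ℝ (reach A B (x :: w₁)) with hd
  set t := d - r + 1 with ht
  -- hcon : ∀ x' v, v.length ≤ t → finrank (reach (v ++ x'::w₁)) < d + 1
  have stepA : ∀ x' : Fin m, reach A B (x' :: w₁) = reach A B (x :: w₁) →
      Submodule.map (Pm A (x' :: w₁)).mulVecLin (W A B t) ≤ reach A B (x :: w₁) := by
    intro x' hx'
    apply map_W_le
    intro v hv
    have h1 : finrank ℝ (reach A B (v ++ x' :: w₁)) ≤ d := by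
      have := hcon x' v hv
      exact Nat.le_of_lt_succ this
    have h2 := reach_append A B v (x' :: w₁)
    have h3 : reach A B (x' :: w₁) = reach A B (v ++ x' :: w₁) := by
      apply eq_of_le_of_finrank_le (h2 ▸ le_sup_right)
      rw [hx']
      exact h1
    have h4 : Submodule.map (Pm A (x' :: w₁)).mulVecLin (reach A B v)
        ≤ reach A B (v ++ x' :: w₁) := h2 ▸ le_sup_left
    rw [← h3, hx'] at h4
    exact h4
  have hWt_mapw := stepA x rfl
  have hWt_ne : W A B t ≠ ⊤ := by
    intro he
    rw [he, map_unit_top (Pm_isUnit A hA _)] at hWt_mapw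
    have h1 : reach A B (x :: w₁) = ⊤ := top_le_iff.mp hWt_mapw
    rw [hd, h1, finrank_top, Module.finrank_fintype_fun_eq_card, Fintype.card_fin] at hd_lt
    omega
  have hW1 := r_le_finrank_W1 A B hm hB
  have hgrow := W_growth A B hctrl (show 1 ≤ t by omega) hWt_ne
  have hWt_le_d : finrank ℝ (W A B t) ≤ d := by
    have h1 : finrank ℝ (Submodule.map (Pm A (x :: w₁)).mulVecLin (W A B t)) ≤ d :=
      Submodule.finrank_mono hWt_mapw
    rwa [finrank_map_unit (Pm_isUnit A hA _)] at h1
  have hWt_eq : finrank ℝ (W A B t) = d := by omega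
  have hW1_eq : finrank ℝ (W A B 1) = r := by omega
  -- every input space equals W 1
  have hBi : ∀ i, LinearMap.range (B i).mulVecLin = W A B 1 := by
    intro i
    apply eq_of_le_of_finrank_le
    · rw [← reach_singleton A B i]
      exact reach_le_W A B (by simp)
    · rw [hW1_eq]
      exact hB i
  -- the reach space does not depend on the head of the word
  have hDx : ∀ x' : Fin m, reach A B (x' :: w₁)
      = Submodule.map (Pm A w₁).mulVecLin (W A B 1) ⊔ reach A B w₁ := by
    intro x'
    have h1 := reach_append A B [x'] w₁
    rw [List.singleton_append] at h1
    rw [h1, reach_singleton, hBi x']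
  have hD : ∀ x' : Fin m, reach A B (x' :: w₁) = reach A B (x :: w₁) := by
    intro x'
    rw [hDx x', hDx x]
  have hE : ∀ x' : Fin m,
      Submodule.map (Pm A w₁).mulVecLin
        (Submodule.map (A x').mulVecLin (W A B t)) = reach A B (x :: w₁) := by
    intro x'
    have h1 := stepA x' (hD x')
    have h1' : Submodule.map (Pm A (x' :: w₁)).mulVecLin (W A B t) = reach A B (x :: w₁) := by
      apply eq_of_le_of_finrank_le h1
      rw [finrank_map_unit (Pm_isUnit A hA _), hWt_eq]
    rw [← h1', Pm_cons, Matrix.mulVecLin_mul, Submodule.map_comp]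
  have hEx : ∀ x' : Fin m,
      Submodule.map (A x').mulVecLin (W A B t)
        = Submodule.map (A x).mulVecLin (W A B t) := by
    intro x'
    apply Submodule.map_injective_of_injective (mulVecLin_injective (Pm_isUnit A hA w₁))
    rw [hE x', hE x]
  set T := Submodule.map (A x).mulVecLin (W A B t) with hT
  have hF : W A B 1 ≤ T := by
    have h1 : Submodule.map (Pm A w₁).mulVecLin (W A B 1) ≤ reach A B (x :: w₁) := by
      rw [hDx x]; exact le_sup_left
    rw [← hE x] at h1
    exact (Submodule.map_le_map_iff_of_injective
      (mulVecLin_injective (Pm_isUnit A hA w₁)) _ _).mp h1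
  have hG : W A B (t + 1) ≤ T := by
    rw [W_le_iff]
    intro v hv
    rcases List.eq_nil_or_concat v with rfl | ⟨v', i, rfl⟩
    · rw [reach_nil]; exact bot_le
    · rw [List.concat_eq_append, reach_concat]
      apply sup_le
      · have h1 : v'.length ≤ t := by
          rw [List.concat_eq_append, List.length_append] at hv
          simp at hv
          omega
        calc Submodule.map (A i).mulVecLin (reach A B v')
            ≤ Submodule.map (A i).mulVecLin (W A B t) := Submodule.map_mono (reach_le_W A B h1)
          _ = T := hEx i
      · rw [hBi i]; exact hF
  have hTrank : finrank ℝ T = d := by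
    rw [hT, finrank_map_unit (hA x), hWt_eq]
  have hWtT : W A B t = T := by
    apply eq_of_le_of_finrank_le (le_trans (W_mono A B (Nat.le_succ t)) hG)
    rw [hTrank, hWt_eq]
  have hstuck : W A B (t + 1) ≤ W A B t := hWtT ▸ hG
  exact hWt_ne (W_stuck A B hctrl hstuck)

/-- Iterated construction: words of controlled length with reach of dimension
at least `min n (r + s)`. -/
lemma build
    (hctrl : (⋃ π : List (Fin m), (reach A B π : Set (Fin n → ℝ))) = Set.univ)
    {r : ℕ} (hm : 1 ≤ m) (hA : ∀ i, IsUnit (A i)) (hB : ∀ i, r ≤ (B i).rank)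
    (s : ℕ) :
    ∃ w : List (Fin m), w ≠ [] ∧ 2 * w.length ≤ 2 + s * (s + 1) ∧
      min n (r + s) ≤ finrank ℝ (reach A B w) := by
  induction s with
  | zero =>
      refine ⟨[⟨0, hm⟩], by simp, by simp, ?_⟩
      have h1 : (B ⟨0, hm⟩).rank ≤ finrank ℝ (reach A B [⟨0, hm⟩]) := by
        rw [reach_singleton]
        exact Nat.le_of_eq rfl
      exact le_trans (min_le_right n (r + 0)) (le_trans (by simp; exact hB ⟨0, hm⟩) h1)
  | succ s ih =>
      obtain ⟨w, hne, hlen, hrank⟩ := ih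
      have hmul : s * (s + 1) ≤ (s + 1) * (s + 1 + 1) :=
        Nat.mul_le_mul (Nat.le_succ s) (Nat.le_succ (s + 1))
      have hmul2 : (s + 1) * (s + 1 + 1) = s * (s + 1) + 2 * (s + 1) := by ring
      by_cases hcase : n ≤ r + s
      · refine ⟨w, hne, by omega, ?_⟩
        rw [min_eq_left hcase] at hrank
        exact le_trans (min_le_left _ _) hrank
      · push_neg at hcase
        rw [min_eq_right (by omega)] at hrank
        by_cases hd : r + s + 1 ≤ finrank ℝ (reach A B w)
        · exact ⟨w, hne, by omega, le_trans (min_le_right _ _) hd⟩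
        · push_neg at hd
          have hdeq : finrank ℝ (reach A B w) = r + s := by omega
          obtain ⟨x', v, hvlen, hrk⟩ := main_step A B hctrl hm hA hB w hne
            (by omega) (by omega)
          refine ⟨v ++ x' :: w.tail, by simp, ?_, ?_⟩
          · have hwl : w.tail.length + 1 = w.length := by
              cases w with
              | nil => exact absurd rfl hne
              | cons a l => simp
            rw [hdeq] at hvlen
            simp only [List.length_append, List.length_cons]
            omega
          · rw [hdeq] at hrk
            exact le_trans (min_le_right _ _) hrk

end Stmt14Aux

/-- Rank-dependent bound: if all `A_i` are invertible and all `B_i` have rank at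
least `r`, a controllable system admits a controllable sequence of length at most
`(n-r+1)(n-r)/2 + 1`. -/
theorem stmt14 {n m : ℕ} (hn : 1 ≤ n) (hm : 1 ≤ m) (r : ℕ) (hr : 1 ≤ r) (hrn : r < n)
    (A : Fin m → Matrix (Fin n) (Fin n) ℝ) {q : Fin m → ℕ}
    (B : ∀ i, Matrix (Fin n) (Fin (q i)) ℝ)
    (hA : ∀ i, IsUnit (A i))
    (hB : ∀ i, r ≤ (B i).rank)
    (hctrl : (⋃ π : List (Fin m), (reach A B π : Set (Fin n → ℝ))) = Set.univ) :
    ∃ π : List (Fin m), reach A B π = ⊤ ∧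
      π.length ≤ (n - r + 1) * (n - r) / 2 + 1 := by
  obtain ⟨w, hne, hlen, hrank⟩ := Stmt14Aux.build A B hctrl hm hA hB (n - r)
  have h1 : r + (n - r) = n := by omega
  rw [h1, min_self] at hrank
  have htop : reach A B w = ⊤ := by
    apply Submodule.eq_top_of_finrank_eq
    have h2 : Module.finrank ℝ (reach A B w) ≤ n := by
      have := Submodule.finrank_le (reach A B w)
      rwa [Module.finrank_fintype_fun_eq_card, Fintype.card_fin] at this
    rw [Module.finrank_fintype_fun_eq_card, Fintype.card_fin]
    omega
  refine ⟨w, htop, ?_⟩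
  have hcomm : (n - r + 1) * (n - r) = (n - r) * (n - r + 1) := Nat.mul_comm _ _
  rw [hcomm]
  have heven : (n - r) * (n - r + 1) / 2 * 2 = (n - r) * (n - r + 1) :=
    Nat.div_mul_cancel (Nat.even_mul_succ_self (n - r)).two_dvd
  generalize he : (n - r) * (n - r + 1) = e at hlen heven ⊢
  omega
end
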